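/- arXiv:1402.0196 — 5 statements merged into one kernel-verified Lean document; each statement's English description precedes it below -/
import Mathlib

section
/- Every caterpillar admits a graceful labeling. -/
open SimpleGraph

/-- The weight of an edge under a vertex labeling: `|f u - f v|`. -/
def edgeWt {V : Type*} (f : V → ℕ) : Sym2 V → ℕ :=
  Sym2.lift ⟨fun u v => ((f u : ℤ) - f v).natAbs, fun u v => by simp only []; omega⟩

/-- `f` is a graceful labeling of `G`: injective into `{0,...,m}` with induced
edge weights exactly `{1,...,m}`, where `m` is the number of edges. -/
def IsGracefulLabeling {V : Type*} (G : SimpleGraph V) (f : V → ℕ) : Prop :=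
  Function.Injective f ∧ (∀ v, f v ≤ G.edgeSet.ncard) ∧
    (edgeWt f) '' G.edgeSet = Set.Icc 1 G.edgeSet.ncard

/-- `G` admits a graceful labeling. -/
def IsGraceful {V : Type*} (G : SimpleGraph V) : Prop :=
  ∃ f : V → ℕ, IsGracefulLabeling G f

/-- `p` is a longest path in `G`. -/
def IsLongestPath {V : Type*} (G : SimpleGraph V) {u v : V} (p : G.Walk u v) : Prop :=
  p.IsPath ∧ ∀ (w x : V) (q : G.Walk w x), q.IsPath → q.length ≤ p.length

/-- `G` is a tree all of whose vertices are within distance `k` of some longest path.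
`k = 1` gives caterpillars, `k = 2` gives lobsters. -/
def IsKDistantTree {V : Type*} (G : SimpleGraph V) (k : ℕ) : Prop :=
  G.IsTree ∧ ∃ (u v : V) (p : G.Walk u v), IsLongestPath G p ∧
    ∀ a : V, ∃ b ∈ p.support, G.dist a b ≤ k

/-- `G` is a lobster shell: a lobster with a longest path `P` such that every vertex not
on `P` having a neighbor on `P` has degree exactly `2`. -/
def IsLobsterShell {V : Type*} (G : SimpleGraph V) : Prop :=
  G.IsTree ∧ ∃ (u v : V) (p : G.Walk u v), IsLongestPath G p ∧
    (∀ a : V, ∃ b ∈ p.support, G.dist a b ≤ 2) ∧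
    (∀ a : V, a ∉ p.support → (∃ b ∈ p.support, G.Adj a b) → (G.neighborSet a).ncard = 2)

/-- `f` is a bipartite labeling of `G`. -/
def IsBipartiteLabeling {V : Type*} (G : SimpleGraph V) (f : V → ℕ) : Prop :=
  Function.Injective f ∧ (∀ v, f v ≤ G.edgeSet.ncard) ∧
    ∃ c : ℤ, ∀ u v : V, G.Adj u v →
      ((f u : ℤ) ≤ c ∧ c < (f v : ℤ)) ∨ ((f v : ℤ) ≤ c ∧ c < (f u : ℤ))

/-- The number of distinct edge weights induced by `f` on `G`. -/
noncomputable def distinctWeightCount {V : Type*} (G : SimpleGraph V) (f : V → ℕ) : ℕ :=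
  ((edgeWt f) '' G.edgeSet).ncard


lemma getElem_idx_congr {α : Type*} (l : List α) {i j : ℕ} (h : i = j) (hi : i < l.length) :
    l[i]'hi = l[j]'(h ▸ hi) := by subst h; rfl

lemma exists_walk_of_chain {V : Type*} {G : SimpleGraph V} :
    ∀ (l : List V) (hl : l ≠ []), List.Chain' G.Adj l →
      ∃ w : G.Walk (l.head hl) (l.getLast hl), w.support = l := by
  intro l
  induction l with
  | nil => intro hl _; exact absurd rfl hl
  | cons a l ih =>
    intro hl hc
    cases l with
    | nil => exact ⟨SimpleGraph.Walk.nil, rfl⟩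
    | cons b l' =>
      obtain ⟨hadj, hc'⟩ := List.isChain_cons_cons.mp hc
      obtain ⟨w, hw⟩ := ih (List.cons_ne_nil _ _) hc'
      exact ⟨SimpleGraph.Walk.cons hadj w, by change a :: w.support = _; rw [hw]⟩

theorem zigzag {V : Type*} [Fintype V] (G : SimpleGraph V)
    (K : V → ℕ) (e : V → ℕ) (low : V → Prop)
    (he : Function.Injective e)
    (hcard : Fintype.card V = G.edgeSet.ncard + 1)
    (hKadj : ∀ a b, G.Adj a b → K a ≠ K b)
    (hlowadj : ∀ a b, G.Adj a b → (low a ↔ ¬ low b))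
    (hbetween : ∀ a b y, G.Adj a b → K a < K b →
      (K a < K y ∨ (K a = K y ∧ e a < e y)) → (K y < K b ∨ (K y = K b ∧ e y < e b)) →
      (low y ↔ low b))
    (hparent : ∀ a a' b, G.Adj a b → G.Adj a' b → K a < K b → K a' < K b → a = a') :
    IsGraceful G := by
  classical
  set m := G.edgeSet.ncard with hm
  set ord : V → V → Prop := fun x y => K x < K y ∨ (K x = K y ∧ e x < e y) with hord
  have ord_irrefl : ∀ x, ¬ ord x x := by
    intro x h; rcases h with h | ⟨_, h⟩ <;> omega
  have ord_trans : ∀ {x y z}, ord x y → ord y z → ord x z := by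
    rintro x y z (h1 | ⟨h1, h1'⟩) (h2 | ⟨h2, h2'⟩)
    · exact Or.inl (h1.trans h2)
    · exact Or.inl (h2 ▸ h1)
    · exact Or.inl (h1 ▸ h2)
    · exact Or.inr ⟨h1.trans h2, h1'.trans h2'⟩
  have ord_total : ∀ x y, x ≠ y → ord x y ∨ ord y x := by
    intro x y hxy
    rcases lt_trichotomy (K x) (K y) with h | h | h
    · exact Or.inl (Or.inl h)
    · rcases lt_trichotomy (e x) (e y) with h' | h' | h'
      · exact Or.inl (Or.inr ⟨h, h'⟩)
      · exact absurd (he h') hxy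
      · exact Or.inr (Or.inr ⟨h.symm, h'⟩)
    · exact Or.inr (Or.inl h)
  set cnt : (V → Prop) → V → ℕ := fun P x => {y | P y ∧ ord y x}.ncard with hcnt
  have cnt_lt : ∀ (P : V → Prop) (x y : V), P x → ord x y → cnt P x < cnt P y := by
    intro P x y hPx hxy
    refine Set.ncard_lt_ncard ⟨?_, ?_⟩ (Set.toFinite _)
    · rintro z ⟨h1, h2⟩; exact ⟨h1, ord_trans h2 hxy⟩
    · intro hsub
      exact ord_irrefl x (hsub ⟨hPx, hxy⟩).2
  have cnt_lt_total : ∀ (P : V → Prop) (x : V), P x → cnt P x < {y | P y}.ncard := by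
    intro P x hPx
    refine Set.ncard_lt_ncard ⟨fun z hz => hz.1, fun hsub => ord_irrefl x (hsub hPx).2⟩
      (Set.toFinite _)
  set nL := {y | low y}.ncard with hnL
  set nH := {y | ¬ low y}.ncard with hnH
  have hnLH : nL + nH = m + 1 := by
    have h1 : {y | ¬ low y} = {y | low y}ᶜ := rfl
    have h2 := Set.ncard_add_ncard_compl {y | low y} (Set.toFinite _) (Set.toFinite _)
    rw [← h1] at h2
    rw [hnL, hnH, h2, Nat.card_eq_fintype_card, hcard]
  set f : V → ℕ := fun x => if low x then cnt low x else m - cnt (fun y => ¬ low y) x with hf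
  have f_low : ∀ x, low x → f x = cnt low x := fun x hx => if_pos hx
  have f_high : ∀ x, ¬ low x → f x = m - cnt (fun y => ¬ low y) x := fun x hx => if_neg hx
  have f_low_lt : ∀ x, low x → f x < nL := by
    intro x hx; rw [f_low x hx]; exact cnt_lt_total _ x hx
  have f_high_ge : ∀ x, ¬ low x → nL ≤ f x := by
    intro x hx
    have h1 : cnt (fun y => ¬ low y) x < nH := cnt_lt_total _ x hx
    rw [f_high x hx]; omega
  have f_le : ∀ x, f x ≤ m := by
    intro x
    by_cases hx : low x
    · have := f_low_lt x hx; omega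
    · rw [f_high x hx]; omega
  have f_ne : ∀ x y, ord x y → f x ≠ f y := by
    intro x y hxy
    by_cases hx : low x <;> by_cases hy : low y
    · rw [f_low x hx, f_low y hy]; exact Nat.ne_of_lt (cnt_lt _ x y hx hxy)
    · have := f_low_lt x hx; have := f_high_ge y hy; omega
    · have := f_low_lt y hy; have := f_high_ge x hx; omega
    · have h1 := cnt_lt (fun y => ¬ low y) x y hx hxy
      have h2 : cnt (fun y => ¬ low y) y < nH := cnt_lt_total _ y hy
      rw [f_high x hx, f_high y hy]; omega
  have f_inj : Function.Injective f := by
    intro x y hfeq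
    by_contra hne
    rcases ord_total x y hne with h | h
    · exact f_ne x y h hfeq
    · exact f_ne y x h hfeq.symm
  have B_le : ∀ x, cnt (fun _ => True) x ≤ m := by
    intro x
    have h := cnt_lt_total (fun _ => True) x trivial
    have h2 : {y : V | (fun _ : V => True) y}.ncard = m + 1 := by
      have he' : {y : V | (fun _ : V => True) y} = Set.univ := by ext; simp
      rw [he', Set.ncard_univ, Nat.card_eq_fintype_card, hcard]
    have h3 : cnt (fun _ => True) x < m + 1 := by rw [← h2]; exact h
    omega
  have cnt_congr : ∀ (P Q : V → Prop) (x : V), (∀ y, P y ↔ Q y) → cnt P x = cnt Q x := by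
    intro P Q x hPQ
    have : {y | P y ∧ ord y x} = {y | Q y ∧ ord y x} := by
      ext z; simp only [Set.mem_setOf_eq, hPQ z]
    simp only [hcnt, this]
  have cnt_split : ∀ x, cnt low x + cnt (fun y => ¬ low y) x = cnt (fun _ => True) x := by
    intro x
    have hdisj : Disjoint {y | low y ∧ ord y x} {y | ¬ low y ∧ ord y x} := by
      rw [Set.disjoint_left]; rintro z ⟨h1, _⟩ ⟨h2, _⟩; exact h2 h1
    have hun : {y | low y ∧ ord y x} ∪ {y | ¬ low y ∧ ord y x} = {y | True ∧ ord y x} := by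
      ext z; simp only [Set.mem_union, Set.mem_setOf_eq, true_and]; tauto
    simp only [hcnt]
    rw [← Set.ncard_union_eq hdisj (Set.toFinite _) (Set.toFinite _), hun]
  have step : ∀ a b, G.Adj a b → K a < K b →
      cnt (fun y => (low y ↔ low a)) b = cnt (fun y => (low y ↔ low a)) a + 1 := by
    intro a b hab hK
    have hordab : ord a b := Or.inl hK
    have hins : {y | (low y ↔ low a) ∧ ord y b} = insert a {y | (low y ↔ low a) ∧ ord y a} := by
      ext z
      simp only [Set.mem_insert_iff, Set.mem_setOf_eq]
      constructor
      · rintro ⟨h1, h2⟩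
        by_cases hz : z = a
        · exact Or.inl hz
        rcases ord_total z a hz with h | h
        · exact Or.inr ⟨h1, h⟩
        · exfalso
          have hb := hbetween a b z hab hK h h2
          have := hlowadj a b hab
          tauto
      · rintro (rfl | ⟨h1, h2⟩)
        · exact ⟨Iff.rfl, hordab⟩
        · exact ⟨h1, ord_trans h2 hordab⟩
    show Set.ncard _ = Set.ncard _ + 1
    rw [hins, Set.ncard_insert_of_notMem (fun hmem => ord_irrefl a hmem.2) (Set.toFinite _)]
  have hW : ∀ a b, G.Adj a b → K a < K b →
      ((f a : ℤ) - f b).natAbs = m + 1 - cnt (fun _ => True) b := by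
    intro a b hab hK
    have hops := hlowadj a b hab
    have hsplitb := cnt_split b
    have hBb := B_le b
    by_cases lb : low b
    · have la : ¬ low a := by tauto
      have hstep : cnt (fun y => ¬ low y) b = cnt (fun y => ¬ low y) a + 1 := by
        have h0 := step a b hab hK
        rwa [cnt_congr (fun y => (low y ↔ low a)) (fun y => ¬ low y) b (by tauto),
          cnt_congr (fun y => (low y ↔ low a)) (fun y => ¬ low y) a (by tauto)] at h0
      have h1 : f b = cnt low b := f_low b lb
      have h2 : f a = m - cnt (fun y => ¬ low y) a := f_high a la
      have h3 := f_low_lt b lb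
      have h4 := f_high_ge a la
      have h5 : cnt (fun y => ¬ low y) a < nH := cnt_lt_total _ a la
      omega
    · have la : low a := by tauto
      have hstep : cnt low b = cnt low a + 1 := by
        have h0 := step a b hab hK
        rwa [cnt_congr (fun y => (low y ↔ low a)) low b (by tauto),
          cnt_congr (fun y => (low y ↔ low a)) low a (by tauto)] at h0
      have h1 : f a = cnt low a := f_low a la
      have h2 : f b = m - cnt (fun y => ¬ low y) b := f_high b lb
      have h3 := f_low_lt a la
      have h4 := f_high_ge b lb
      have h5 : cnt (fun y => ¬ low y) b < nH := cnt_lt_total _ b lb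
      omega
  have hwt_mk : ∀ a b : V, edgeWt f s(a, b) = ((f a : ℤ) - f b).natAbs := fun a b => rfl
  refine ⟨f, f_inj, f_le, ?_⟩
  have orient : ∀ ed ∈ G.edgeSet, ∃ a b, G.Adj a b ∧ K a < K b ∧ ed = s(a, b) := by
    intro ed hed
    revert hed
    refine Sym2.ind ?_ ed
    intro a b hed
    rw [SimpleGraph.mem_edgeSet] at hed
    rcases lt_or_gt_of_ne (hKadj a b hed) with h | h
    · exact ⟨a, b, hed, h, rfl⟩
    · exact ⟨b, a, hed.symm, h, Sym2.eq_swap⟩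
  have hsub : edgeWt f '' G.edgeSet ⊆ Set.Icc 1 m := by
    rintro w ⟨ed, hed, rfl⟩
    obtain ⟨a, b, hab, hK, rfl⟩ := orient ed hed
    rw [hwt_mk, hW a b hab hK]
    have := B_le b
    have hB1 : 0 < cnt (fun _ => True) b := by
      have : a ∈ {y | True ∧ ord y b} := ⟨trivial, Or.inl hK⟩
      have hpos := Set.ncard_pos (Set.toFinite {y | True ∧ ord y b})
      exact hpos.mpr ⟨a, this⟩
    rw [Set.mem_Icc]
    omega
  have hinjOn : Set.InjOn (edgeWt f) G.edgeSet := by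
    intro e1 he1 e2 he2 hw
    obtain ⟨a, b, hab, hK1, rfl⟩ := orient e1 he1
    obtain ⟨c, d, hcd, hK2, rfl⟩ := orient e2 he2
    rw [hwt_mk, hwt_mk, hW a b hab hK1, hW c d hcd hK2] at hw
    have hBb := B_le b
    have hBd := B_le d
    have hBpos : 0 < cnt (fun _ => True) b := by
      refine (Set.ncard_pos (Set.toFinite _)).mpr ⟨a, ⟨trivial, Or.inl hK1⟩⟩
    have hBpos' : 0 < cnt (fun _ => True) d := by
      refine (Set.ncard_pos (Set.toFinite _)).mpr ⟨c, ⟨trivial, Or.inl hK2⟩⟩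
    have hBeq : cnt (fun _ => True) b = cnt (fun _ => True) d := by omega
    have hbd : b = d := by
      by_contra hne
      rcases ord_total b d hne with h | h
      · exact absurd hBeq (Nat.ne_of_lt (cnt_lt _ b d trivial h))
      · exact absurd hBeq.symm (Nat.ne_of_lt (cnt_lt _ d b trivial h))
    subst hbd
    rw [hparent a c b hab hcd hK1 hK2]
  have hIccCard : (Set.Icc 1 m).ncard = m := by
    rw [← Finset.coe_Icc, Set.ncard_coe_finset, Nat.card_Icc]
    omega
  refine Set.eq_of_subset_of_ncard_le hsub ?_ ?_
  · rw [Set.ncard_image_of_injOn hinjOn, hIccCard]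
  · rw [← Finset.coe_Icc]; exact Finset.finite_toSet _

theorem stmt2 {V : Type*} [Fintype V] (G : SimpleGraph V)
    (h : IsKDistantTree G 1) : IsGraceful G := by
  classical
  obtain ⟨hT, u, v, p, ⟨hp, -⟩, hcover⟩ := h
  have hconn : G.Connected := hT.isConnected
  have huniq : ∀ ⦃x y : V⦄ (q r : G.Path x y), q = r :=
    (SimpleGraph.isAcyclic_iff_path_unique.mp hT.IsAcyclic)
  have path_eq : ∀ {x y : V} (q r : G.Walk x y), q.IsPath → r.IsPath → q = r := by
    intro x y q r hq hr
    exact congrArg Subtype.val (huniq ⟨q, hq⟩ ⟨r, hr⟩)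
  set s : List V := p.support with hs
  have hnd : s.Nodup := hp.support_nodup
  have hchain : List.Chain' G.Adj s := p.isChain_adj_support
  -- spine segments
  have seg : ∀ (i j : ℕ) (hij : i ≤ j) (hj : j < s.length),
      ∃ w : G.Walk (s[i]'(by omega)) (s[j]'hj),
        w.support = (s.drop i).take (j - i + 1) := by
    intro i j hij hj
    have hi : i < s.length := lt_of_le_of_lt hij hj
    have hlen : ((s.drop i).take (j - i + 1)).length = j - i + 1 := by
      rw [List.length_take, List.length_drop]; omega
    have hne : (s.drop i).take (j - i + 1) ≠ [] := by
      intro hc; rw [hc] at hlen; simp at hlen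
    have hcl : List.Chain' G.Adj ((s.drop i).take (j - i + 1)) :=
      List.IsChain.take (List.IsChain.drop hchain i) _
    obtain ⟨w, hw⟩ := exists_walk_of_chain _ hne hcl
    have h0 : ((s.drop i).take (j - i + 1)).head hne = s[i]'hi := by
      rw [List.head_eq_getElem hne, List.getElem_take, List.getElem_drop]
      exact getElem_idx_congr s (by omega) _
    have h1 : ((s.drop i).take (j - i + 1)).getLast hne = s[j]'hj := by
      rw [List.getLast_eq_getElem hne,
        getElem_idx_congr _ (show ((s.drop i).take (j - i + 1)).length - 1 = j - i by omega),
        List.getElem_take, List.getElem_drop]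
      exact getElem_idx_congr s (by omega) _
    exact ⟨w.copy h0 h1, by rw [SimpleGraph.Walk.support_copy, hw]⟩
  have seg_nodup : ∀ i j, ((s.drop i).take (j - i + 1)).Nodup := fun i j =>
    hnd.sublist ((List.take_sublist _ _).trans (List.drop_sublist _ _))
  have seg_sub : ∀ i j, ∀ x ∈ (s.drop i).take (j - i + 1), x ∈ s := fun i j x hx =>
    List.drop_subset _ _ (List.take_subset _ _ hx)
  -- no chords on the spine
  have noChord : ∀ (i j : ℕ) (hij : i + 1 < j) (hj : j < s.length),
      ¬ G.Adj (s[i]'(by omega)) (s[j]'hj) := by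
    intro i j hij hj hadj
    obtain ⟨w, hw⟩ := seg i j (by omega) hj
    have hwp : w.IsPath := (SimpleGraph.Walk.isPath_def w).mpr (hw ▸ seg_nodup i j)
    have hq : (SimpleGraph.Walk.cons hadj SimpleGraph.Walk.nil).IsPath := by
      rw [SimpleGraph.Walk.isPath_def]
      simp only [SimpleGraph.Walk.support_cons, SimpleGraph.Walk.support_nil]
      refine List.nodup_cons.mpr ⟨?_, List.nodup_singleton _⟩
      simp only [List.mem_singleton]
      exact hadj.ne
    have heq := path_eq _ _ hwp hq
    have hlw : w.support.length = j - i + 1 := by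
      rw [hw, List.length_take, List.length_drop]; omega
    have hlen2 := congrArg (fun q : G.Walk _ _ => q.support.length) heq
    simp only [SimpleGraph.Walk.support_cons, SimpleGraph.Walk.support_nil, List.length_cons,
      List.length_nil, hlw] at hlen2
    omega
  -- every off-spine vertex has a spine neighbor
  have adj_of_dist_one : ∀ x b : V, G.dist x b = 1 → G.Adj x b := by
    intro x b hd
    obtain ⟨w, hwl⟩ := hconn.exists_walk_length_eq_dist x b
    rw [hd] at hwl
    cases w with
    | nil => simp at hwl
    | cons hadj w' =>
      cases w' with
      | nil => exact hadj
      | cons h2 w'' => simp [SimpleGraph.Walk.length_cons] at hwl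
  have nbr : ∀ x, x ∉ s → ∃ b ∈ s, G.Adj x b := by
    intro x hx
    obtain ⟨b, hb, hdist⟩ := hcover x
    have hxb : x ≠ b := fun hc => hx (hc ▸ hb)
    have h1 : 0 < G.dist x b := hconn.pos_dist_of_ne hxb
    exact ⟨b, hb, adj_of_dist_one x b (by omega)⟩
  -- all neighbors of an off-spine vertex are on the spine
  have offAdj : ∀ x c, x ∉ s → G.Adj x c → c ∈ s := by
    intro x c hx hadj
    by_contra hc
    obtain ⟨b, hb, hxb⟩ := nbr x hx
    obtain ⟨b', hb', hcb'⟩ := nbr c hc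
    have segAny : ∃ w : G.Walk b b', (∀ z ∈ w.support, z ∈ s) ∧ w.support.Nodup := by
      rcases le_total (s.idxOf b) (s.idxOf b') with hle | hle
      · have hj : s.idxOf b' < s.length := List.idxOf_lt_length_iff.mpr hb'
        obtain ⟨w, hw⟩ := seg (s.idxOf b) (s.idxOf b') hle hj
        have e1 : s[s.idxOf b]'(by omega) = b := List.getElem_idxOf (by omega)
        have e2 : s[s.idxOf b']'hj = b' := List.getElem_idxOf hj
        refine ⟨(w.copy e1 e2), ?_, ?_⟩
        · rw [SimpleGraph.Walk.support_copy, hw]; exact seg_sub _ _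
        · rw [SimpleGraph.Walk.support_copy, hw]; exact seg_nodup _ _
      · have hj : s.idxOf b < s.length := List.idxOf_lt_length_iff.mpr hb
        obtain ⟨w, hw⟩ := seg (s.idxOf b') (s.idxOf b) hle hj
        have e1 : s[s.idxOf b']'(by omega) = b' := List.getElem_idxOf (by omega)
        have e2 : s[s.idxOf b]'hj = b := List.getElem_idxOf hj
        refine ⟨(w.copy e1 e2).reverse, ?_, ?_⟩
        · rw [SimpleGraph.Walk.support_reverse, SimpleGraph.Walk.support_copy, hw]
          intro z hz
          exact seg_sub _ _ z (List.mem_reverse.mp hz)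
        · rw [SimpleGraph.Walk.support_reverse, SimpleGraph.Walk.support_copy, hw]
          exact (List.nodup_reverse).mpr (seg_nodup _ _)
    obtain ⟨w, hwsub, hwnd⟩ := segAny
    have hxw : x ∉ w.support := fun hmem => hx (hwsub x hmem)
    have hP2 : (SimpleGraph.Walk.cons hxb w).IsPath :=
      ((SimpleGraph.Walk.isPath_def w).mpr hwnd).cons hxw
    have hP1 : (SimpleGraph.Walk.cons hadj (SimpleGraph.Walk.cons hcb' SimpleGraph.Walk.nil)).IsPath := by
      rw [SimpleGraph.Walk.isPath_def]
      simp only [SimpleGraph.Walk.support_cons, SimpleGraph.Walk.support_nil]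
      refine List.nodup_cons.mpr ⟨?_, List.nodup_cons.mpr ⟨?_, List.nodup_singleton _⟩⟩
      · intro hmem
        rcases List.mem_cons.mp hmem with h1 | h1
        · exact hadj.ne h1
        · rw [List.mem_singleton] at h1
          exact hx (h1 ▸ hb')
      · intro hmem
        rw [List.mem_singleton] at hmem
        exact hc (hmem ▸ hb')
    have heq := path_eq _ _ hP1 hP2
    have : c ∈ (SimpleGraph.Walk.cons hxb w).support := by
      rw [← heq]
      simp
    rw [SimpleGraph.Walk.support_cons] at this
    rcases List.mem_cons.mp this with h1 | h1
    · exact hadj.ne h1.symm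
    · exact hc (hwsub c h1)
  -- unique spine neighbor
  have uniqAux : ∀ (x : V) (hx : x ∉ s) (i j : ℕ) (hij : i < j) (hj : j < s.length),
      G.Adj x (s[i]'(by omega)) → G.Adj x (s[j]'hj) → False := by
    intro x hx i j hij hj h1 h2
    obtain ⟨w, hw⟩ := seg i j (le_of_lt hij) hj
    have hwnd : w.support.Nodup := hw ▸ seg_nodup i j
    have hxw : x ∉ w.support := by
      rw [hw]; intro hmem; exact hx (seg_sub _ _ x hmem)
    have hP2 : (SimpleGraph.Walk.cons h1 w).IsPath :=
      ((SimpleGraph.Walk.isPath_def w).mpr hwnd).cons hxw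
    have hP1 : (SimpleGraph.Walk.cons h2 SimpleGraph.Walk.nil).IsPath := by
      rw [SimpleGraph.Walk.isPath_def]
      simp only [SimpleGraph.Walk.support_cons, SimpleGraph.Walk.support_nil]
      refine List.nodup_cons.mpr ⟨?_, List.nodup_singleton _⟩
      simp only [List.mem_singleton]
      exact h2.ne
    have heq := path_eq _ _ hP1 hP2
    have hlw : w.support.length = j - i + 1 := by
      rw [hw, List.length_take, List.length_drop]; omega
    have hlen2 := congrArg (fun q : G.Walk _ _ => q.support.length) heq
    simp only [SimpleGraph.Walk.support_cons, SimpleGraph.Walk.support_nil, List.length_cons,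
      List.length_nil, hlw] at hlen2
    omega
  have uniqNbr : ∀ x, x ∉ s → ∀ c c', G.Adj x c → G.Adj x c' → c = c' := by
    intro x hx c c' h1 h2
    have hcs := offAdj x c hx h1
    have hcs' := offAdj x c' hx h2
    have hc : c = s[s.idxOf c]'(List.idxOf_lt_length_iff.mpr hcs) :=
      (List.getElem_idxOf _).symm
    have hc' : c' = s[s.idxOf c']'(List.idxOf_lt_length_iff.mpr hcs') :=
      (List.getElem_idxOf _).symm
    rcases lt_trichotomy (s.idxOf c) (s.idxOf c') with hlt | heq | hlt
    · exact absurd (uniqAux x hx _ _ hlt _ (hc ▸ h1) (hc' ▸ h2)) not_false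
    · rw [hc, hc', getElem_idx_congr s heq]
    · exact absurd (uniqAux x hx _ _ hlt _ (hc' ▸ h2) (hc ▸ h1)) not_false
  have anch : ∀ x, x ∉ s → ∃ b, b ∈ s ∧ G.Adj x b ∧ ∀ c, G.Adj x c → c = b := by
    intro x hx
    obtain ⟨b, hb, hadj⟩ := nbr x hx
    exact ⟨b, hb, hadj, fun c hc => uniqNbr x hx c b hc hadj⟩
  choose anchor hanchS hanchAdj hanchU using anch
  -- the index function
  let idx : V → ℕ := fun x => if hx : x ∈ s then s.idxOf x else s.idxOf (anchor x hx)
  have idx_spine : ∀ x (hx : x ∈ s), idx x = s.idxOf x := fun x hx => dif_pos hx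
  have idx_leaf : ∀ x (hx : x ∉ s), idx x = s.idxOf (anchor x hx) := fun x hx => dif_neg hx
  have idx_lt : ∀ x, x ∈ s → idx x < s.length := by
    intro x hx; rw [idx_spine x hx]; exact List.idxOf_lt_length_iff.mpr hx
  have spine_inj : ∀ x y, x ∈ s → y ∈ s → idx x = idx y → x = y := by
    intro x y hx hy hxy
    rw [idx_spine x hx, idx_spine y hy] at hxy
    exact (List.idxOf_inj hx).mp hxy
  have spine_get : ∀ x (hx : x ∈ s), s[idx x]'(idx_lt x hx) = x := by
    intro x hx
    rw [getElem_idx_congr s (idx_spine x hx)]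
    exact List.getElem_idxOf _
  have idx_leaf_eq : ∀ x (hx : x ∉ s), idx x = idx (anchor x hx) := by
    intro x hx
    rw [idx_leaf x hx, idx_spine _ (hanchS x hx)]
  -- edge characterization
  have hadjChar : ∀ a b, G.Adj a b →
      (a ∈ s ∧ b ∈ s ∧ (idx b = idx a + 1 ∨ idx a = idx b + 1)) ∨
      (a ∈ s ∧ b ∉ s ∧ idx b = idx a) ∨ (a ∉ s ∧ b ∈ s ∧ idx a = idx b) := by
    intro a b hadj
    by_cases ha : a ∈ s <;> by_cases hb : b ∈ s
    · left
      refine ⟨ha, hb, ?_⟩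
      have hne : idx a ≠ idx b := fun hc => hadj.ne (spine_inj a b ha hb hc)
      have h1 : ¬ (idx a + 1 < idx b) := by
        intro hlt
        exact noChord (idx a) (idx b) hlt (idx_lt b hb)
          (by rw [spine_get a ha, spine_get b hb]; exact hadj)
      have h2 : ¬ (idx b + 1 < idx a) := by
        intro hlt
        exact noChord (idx b) (idx a) hlt (idx_lt a ha)
          (by rw [spine_get a ha, spine_get b hb]; exact hadj.symm)
      omega
    · right; left
      refine ⟨ha, hb, ?_⟩
      rw [idx_leaf_eq b hb, hanchU b hb a hadj.symm]
    · right; right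
      refine ⟨ha, hb, ?_⟩
      rw [idx_leaf_eq a ha, hanchU a ha b hadj]
    · exact absurd (offAdj a b ha hadj) hb
  -- cardinality
  have hcard : Fintype.card V = G.edgeSet.ncard + 1 := by
    have hne : Nonempty V := hconn.nonempty
    have h1 : G.edgeSet.ncard = G.edgeFinset.card := by
      rw [← SimpleGraph.coe_edgeFinset, Set.ncard_coe_finset]
    have h2 := hT.card_edgeFinset
    have h3 : 0 < Fintype.card V := Fintype.card_pos
    omega
  -- instantiate the zigzag labeling
  set K : V → ℕ := fun x => 2 * idx x + if x ∈ s then 0 else 1 with hKdef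
  set low : V → Prop := fun x => (x ∈ s ↔ Even (idx x)) with hlowdef
  refine zigzag G K (fun x => (Fintype.equivFin V x : ℕ)) low
    (fun x y hxy => (Fintype.equivFin V).injective (Fin.val_injective hxy))
    hcard ?_ ?_ ?_ ?_
  · -- hKadj
    intro a b hadj
    rcases hadjChar a b hadj with ⟨ha, hb, hrel⟩ | ⟨ha, hb, heq⟩ | ⟨ha, hb, heq⟩ <;>
      simp only [hKdef] <;> simp [ha, hb] <;> try omega
  · -- hlowadj
    intro a b hadj
    simp only [hlowdef]
    rcases hadjChar a b hadj with ⟨ha, hb, hrel⟩ | ⟨ha, hb, heq⟩ | ⟨ha, hb, heq⟩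
    · simp only [ha, hb, iff_true]
      rcases hrel with h1 | h1 <;> rw [h1] <;> simp [Nat.even_add_one] <;> tauto
    · simp [ha, hb, heq]
    · simp [ha, hb, heq]
  · -- hbetween
    intro a b y hadj hKab hay hyb
    simp only [hKdef] at hKab hay hyb
    simp only [hlowdef]
    rcases hadjChar a b hadj with ⟨ha, hb, hrel⟩ | ⟨ha, hb, heq⟩ | ⟨ha, hb, heq⟩
    · rcases hrel with h1 | h1
      · by_cases hy : y ∈ s
        · exfalso
          simp only [ha, hb, hy, if_true, if_pos] at hay hyb hKab
          rcases hay with h2 | ⟨h2, h3⟩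
          · rcases hyb with h4 | ⟨h4, h5⟩
            · omega
            · have hyB : y = b := spine_inj y b hy hb (by omega)
              rw [hyB] at h5
              exact absurd h5 (lt_irrefl _)
          · have hyA : y = a := spine_inj y a hy ha (by omega)
            rw [hyA] at h3
            exact absurd h3 (lt_irrefl _)
        · simp only [ha, hb, hy, if_true, if_false, if_pos, if_neg] at hay hyb hKab
          have hiy : idx y = idx a := by
            rcases hay with h2 | ⟨h2, _⟩ <;> rcases hyb with h4 | ⟨h4, _⟩ <;> omega
          simp only [hy, hb, iff_true, false_iff, h1, hiy]
          simp [Nat.even_add_one]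
      · exfalso
        simp only [ha, hb, if_pos] at hKab
        omega
    · -- a spine, b leaf on a
      by_cases hy : y ∈ s
      · exfalso
        simp only [ha, hb, hy, if_true, if_false, if_pos, if_neg] at hay hyb hKab
        rcases hay with h2 | ⟨h2, h3⟩
        · rcases hyb with h4 | ⟨h4, _⟩ <;> omega
        · have hyA : y = a := spine_inj y a hy ha (by omega)
          rw [hyA] at h3
          exact absurd h3 (lt_irrefl _)
      · simp only [ha, hb, hy, if_true, if_false, if_pos, if_neg] at hay hyb hKab
        have hiy : idx y = idx a := by
          rcases hay with h2 | ⟨h2, _⟩ <;> rcases hyb with h4 | ⟨h4, _⟩ <;> omega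
        simp only [hy, hb, false_iff, hiy, heq]
    · exfalso
      simp only [ha, hb, if_true, if_false, if_pos, if_neg] at hKab
      rw [heq] at hKab
      omega
  · -- hparent
    intro a a' b hab ha'b hKab hKa'b
    by_cases hb : b ∈ s
    · have key : ∀ c, G.Adj c b → K c < K b → c ∈ s ∧ idx b = idx c + 1 := by
        intro c hcb hK
        simp only [hKdef] at hK
        rcases hadjChar c b hcb with ⟨hc, _, hrel⟩ | ⟨hc, hb', _⟩ | ⟨hc, _, heq⟩
        · refine ⟨hc, ?_⟩
          rcases hrel with h1 | h1
          · exact h1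
          · exfalso; simp [hc, hb] at hK; omega
        · exact absurd hb hb'
        · exfalso
          simp [hc, hb] at hK
          omega
      obtain ⟨ha, h1⟩ := key a hab hKab
      obtain ⟨ha', h2⟩ := key a' ha'b hKa'b
      exact spine_inj a a' ha ha' (by omega)
    · rw [hanchU b hb a hab.symm, hanchU b hb a' ha'b.symm]
end

section
/- Every tree of even order that contains a perfect matching and whose contree (the tree obtained by contracting all edges of the perfect matching) is a caterpillar admits a strongly graceful labeling. -/
open SimpleGraph

/-- The contree of `G` with respect to a perfect matching `M`: the graph obtained
by contracting each edge of `M`. -/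
def contree {V : Type*} {G : SimpleGraph V} (M : G.Subgraph) :
    SimpleGraph (Quot (fun a b : V => a = b ∨ M.Adj a b)) :=
  SimpleGraph.fromRel (fun x y =>
    ∃ a b : V, Quot.mk (fun a b : V => a = b ∨ M.Adj a b) a = x ∧
      Quot.mk (fun a b : V => a = b ∨ M.Adj a b) b = y ∧ G.Adj a b)

@[simp] lemma edgeWt_mk {V : Type*} (f : V → ℕ) (a b : V) :
    edgeWt f s(a, b) = ((f a : ℤ) - f b).natAbs := rfl

section walks
variable {V : Type} {G : SimpleGraph V}

/-- transfer a walk with support in `S` to the induced graph -/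
lemma walk_to_induce {S : Set V} :
    ∀ {a b : V} (p : G.Walk a b) (hp : ∀ v ∈ p.support, v ∈ S),
    ∃ q : (G.induce S).Walk ⟨a, hp a p.start_mem_support⟩ ⟨b, hp b p.end_mem_support⟩,
      q.support.map Subtype.val = p.support := by
  intro a b p
  induction p with
  | nil => intro hp; exact ⟨Walk.nil, by simp⟩
  | cons h p ih =>
      intro hp
      have hp' : ∀ v ∈ p.support, v ∈ S := fun v hv => hp v (by simp [hv])
      obtain ⟨q, hq⟩ := ih hp'
      refine ⟨Walk.cons (by exact h : (G.induce S).Adj ⟨_, _⟩ ⟨_, hp' _ p.start_mem_support⟩) q, ?_⟩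
      show List.map Subtype.val (_ :: q.support) = _
      rw [List.map_cons, hq]; rfl
end walks

section treelem
variable {V : Type} {G : SimpleGraph V}

lemma cons_snd {z c w : V} (h : G.Adj z c) (q : G.Walk c w) :
    (Walk.cons h q).support.tail.head? = some c := by
  rw [Walk.support_cons, List.tail_cons, Walk.support_eq_cons]; rfl

lemma unique_nbr_off_path (hT : G.IsTree) {w x z y : V} (p : G.Walk w x) (hp : p.IsPath)
    (hcov : ∀ a, a ∈ p.support ∨ ∃ b ∈ p.support, G.Adj a b)
    (hz : z ∉ p.support) (hy : y ∈ p.support) (hzy : G.Adj z y) :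
    ∀ u, G.Adj z u → u = y := by
  classical
  intro u hu
  by_contra hne
  have hP1 : (Walk.cons hzy (p.takeUntil y hy).reverse).IsPath := by
    rw [Walk.cons_isPath_iff]
    refine ⟨(hp.takeUntil hy).reverse, fun hmem => hz ?_⟩
    rw [Walk.support_reverse, List.mem_reverse] at hmem
    exact Walk.support_takeUntil_subset _ _ hmem
  have key : ∀ (q2 : G.Walk u w) (h2 : (Walk.cons hu q2).IsPath), False := by
    intro q2 h2
    have heq := (hT.existsUnique_path z w).unique hP1 h2
    have hs := congrArg (fun r : G.Walk z w => r.support.tail.head?) heq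
    simp only [cons_snd] at hs
    exact hne (Option.some.inj hs).symm
  by_cases husup : u ∈ p.support
  · refine key (p.takeUntil u husup).reverse ?_
    rw [Walk.cons_isPath_iff]
    refine ⟨(hp.takeUntil husup).reverse, fun hmem => hz ?_⟩
    rw [Walk.support_reverse, List.mem_reverse] at hmem
    exact Walk.support_takeUntil_subset _ _ hmem
  · obtain ⟨b, hb, hub⟩ := (hcov u).resolve_left husup
    refine key (Walk.cons hub (p.takeUntil b hb).reverse) ?_
    rw [Walk.cons_isPath_iff, Walk.cons_isPath_iff]
    refine ⟨⟨(hp.takeUntil hb).reverse, fun hmem => husup ?_⟩, ?_⟩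
    · rw [Walk.support_reverse, List.mem_reverse] at hmem
      exact Walk.support_takeUntil_subset _ _ hmem
    · intro hmem
      rw [Walk.support_cons] at hmem
      rcases List.mem_cons.mp hmem with h1 | h2
      · exact hu.ne h1
      · rw [Walk.support_reverse, List.mem_reverse] at h2
        exact hz (Walk.support_takeUntil_subset _ _ h2)

lemma adj_start_mem_support_eq_snd {w x u : V} (hT : G.IsTree) (p : G.Walk w x)
    (hp : p.IsPath) (hu : G.Adj w u) (husup : u ∈ p.support) :
    p.support.tail.head? = some u := by
  classical
  have h1 : (Walk.cons hu Walk.nil : G.Walk w u).IsPath := by simp [hu.ne]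
  have h2 := (hT.existsUnique_path w u).unique (hp.takeUntil husup) h1
  have h3 := p.take_spec husup
  have hs := congrArg Walk.support h3
  rw [Walk.support_append, h2] at hs
  simp only [Walk.support_cons, Walk.support_nil] at hs
  rw [← hs]
  rfl

/-- interior vertex of a path has two distinct neighbors -/
lemma interior_not_unique_nbr {a b z y : V} (p : G.Walk a b) (hp : p.IsPath)
    (hz : z ∈ p.support) (hza : z ≠ a) (hzb : z ≠ b)
    (huniq : ∀ u, G.Adj z u → u = y) : False := by
  classical
  obtain ⟨u1, h1, r1, hr1⟩ := Walk.exists_eq_cons_of_ne hza (p.takeUntil z hz).reverse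
  obtain ⟨u2, h2, r2, hr2⟩ := Walk.exists_eq_cons_of_ne hzb (p.dropUntil z hz)
  have hy1 : y ∈ (p.takeUntil z hz).support := by
    rw [← huniq u1 h1]
    have : u1 ∈ (p.takeUntil z hz).reverse.support := by
      rw [hr1, Walk.support_cons]
      exact List.mem_cons_of_mem _ r1.start_mem_support
    rwa [Walk.support_reverse, List.mem_reverse] at this
  have hy2 : y ∈ (p.dropUntil z hz).support.tail := by
    rw [← huniq u2 h2, hr2, Walk.support_cons, List.tail_cons]
    exact r2.start_mem_support
  have hnd : p.support.Nodup := hp.support_nodup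
  rw [← p.take_spec hz, Walk.support_append] at hnd
  exact (List.disjoint_of_nodup_append hnd) hy1 hy2

section del
variable {V : Type} {G : SimpleGraph V}

lemma induce_isTree_of_leaf (hT : G.IsTree) {z y : V} (hzy : G.Adj z y)
    (huniq : ∀ u, G.Adj z u → u = y) :
    (G.induce {v | v ≠ z}).IsTree := by
  classical
  have hyS : y ∈ {v : V | v ≠ z} := hzy.ne'
  have hreach : ∀ a : {v : V | v ≠ z}, (G.induce {v | v ≠ z}).Reachable a ⟨y, hyS⟩ := by
    intro a
    let P := ((hT.isConnected.preconnected a.1 y).some).toPath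
    have hPz : z ∉ (P : G.Walk a.1 y).support := by
      intro hmem
      exact interior_not_unique_nbr _ P.2 hmem (fun h => a.2 h.symm) hzy.ne huniq
    have hsub : ∀ v ∈ (P : G.Walk a.1 y).support, v ∈ {v : V | v ≠ z} :=
      fun v hv hvz => hPz (hvz ▸ hv)
    obtain ⟨q, -⟩ := walk_to_induce (G := G) (P : G.Walk a.1 y) hsub
    exact q.reachable
  constructor
  · rw [connected_iff]
    exact ⟨fun a b => (hreach a).trans (hreach b).symm, ⟨⟨y, hyS⟩⟩⟩
  · intro v c hc
    have hinj : Function.Injective (SimpleGraph.Embedding.induce (G := G) {v | v ≠ z}).toHom :=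
      Subtype.val_injective
    exact hT.IsAcyclic _ (hc.map hinj)

lemma edgeSet_split {z y : V} (hzy : G.Adj z y) (huniq : ∀ u, G.Adj z u → u = y) :
    G.edgeSet = Sym2.map Subtype.val '' (G.induce {v | v ≠ z}).edgeSet ∪ {s(z, y)} := by
  ext e
  induction e with
  | _ a b =>
    simp only [Set.mem_union, Set.mem_singleton_iff, SimpleGraph.mem_edgeSet]
    constructor
    · intro hab
      by_cases haz : a = z
      · subst haz
        right; rw [huniq b hab]
      by_cases hbz : b = z
      · subst hbz
        right; rw [huniq a hab.symm, Sym2.eq_swap]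
      · left
        refine ⟨s(⟨a, haz⟩, ⟨b, hbz⟩), ?_, rfl⟩
        exact hab
    · rintro (⟨e', he', heq⟩ | heq)
      · revert he' heq
        induction e' with
        | _ A B =>
          intro he' heq
          rw [Sym2.map_pair_eq] at heq
          have : G.Adj A.1 B.1 := he'
          rw [Sym2.eq_iff] at heq
          rcases heq with ⟨rfl, rfl⟩ | ⟨rfl, rfl⟩
          · exact this
          · exact this.symm
      · rw [Sym2.eq_iff] at heq
        rcases heq with ⟨rfl, rfl⟩ | ⟨rfl, rfl⟩
        · exact hzy
        · exact hzy.symm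

lemma mem_transfer {S : Set V} {a b : V} {a' b' : ↥S} {q : (G.induce S).Walk a' b'}
    {p : G.Walk a b} (hq : q.support.map Subtype.val = p.support) (A : ↥S) :
    A ∈ q.support ↔ A.1 ∈ p.support := by
  rw [← hq]
  constructor
  · exact fun h => List.mem_map_of_mem h
  · intro h
    obtain ⟨B, hB, hBA⟩ := List.mem_map.mp h
    exact (Subtype.ext hBA : B = A) ▸ hB

lemma image_edgeWt_map_val {S : Set V} (E : Set (Sym2 ↥S)) (g : V → ℕ) (g' : ↥S → ℕ)
    (hgg' : ∀ A : ↥S, g A.1 = g' A) :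
    edgeWt g '' (Sym2.map Subtype.val '' E) = edgeWt g' '' E := by
  rw [Set.image_image]
  refine Set.image_congr' ?_
  intro e
  induction e with
  | _ A B => simp [Sym2.map_pair_eq, edgeWt_mk, hgg']

end del

lemma graceful_of_cover :
    ∀ (n : ℕ) (W : Type) (_ : Fintype W) (C : SimpleGraph W) (w x : W) (p : C.Walk w x),
      Nat.card W = n → C.IsTree → p.IsPath →
      (∀ a, a ∈ p.support ∨ ∃ b ∈ p.support, C.Adj a b) →
      ∃ g : W → ℕ, Function.Injective g ∧ (∀ v, g v ≤ n - 1) ∧ g w = 0 ∧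
        edgeWt g '' C.edgeSet = Set.Icc 1 (n - 1) := by
  intro n
  induction n using Nat.strong_induction_on with
  | _ n ih =>
  intro W _ C w x p hcard hT hp hcov
  classical
  by_cases hn1 : n ≤ 1
  · -- single vertex
    have hcard1 : Nat.card W = 1 := by
      have : Nonempty W := hT.isConnected.nonempty
      have := Nat.card_pos (α := W)
      omega
    have hsub : ∀ a b : W, a = b := by
      have : Subsingleton W := by
        rw [Nat.card_eq_fintype_card] at hcard1
        exact Fintype.card_le_one_iff_subsingleton.mp (le_of_eq hcard1)
      exact fun a b => Subsingleton.elim a b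
    refine ⟨fun _ => 0, fun a b _ => hsub a b, fun v => Nat.zero_le _, rfl, ?_⟩
    have hE : C.edgeSet = ∅ := by
      ext e
      induction e with
      | _ a b =>
        simp only [SimpleGraph.mem_edgeSet, Set.mem_empty_iff_false, iff_false]
        exact fun h => h.ne (hsub a b)
    have hn0 : n - 1 = 0 := by omega
    rw [hE, Set.image_empty, hn0]
    simp
  · push_neg at hn1
    by_cases hleg : ∃ z, C.Adj w z ∧ z ∉ p.support
    · -- Case A : w has a pendant leg z off the path
      obtain ⟨z, hwz, hz⟩ := hleg
      have huniq : ∀ u, C.Adj z u → u = w :=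
        unique_nbr_off_path hT p hp hcov hz p.start_mem_support hwz.symm
      set S : Set W := {v | v ≠ z} with hSdef
      have hT' : (C.induce S).IsTree := induce_isTree_of_leaf hT hwz.symm huniq
      have hmemS : ∀ v ∈ p.support, v ∈ S := fun v hv hvz => hz (hvz ▸ hv)
      obtain ⟨q, hq⟩ := walk_to_induce (G := C) p hmemS
      have hqpath : q.IsPath := by
        rw [Walk.isPath_def]
        have := hp.support_nodup
        rw [← hq] at this
        exact this.of_map
      have hcardS : Nat.card ↥S = n - 1 := by
        rw [Nat.card_eq_fintype_card]
        have h1 : Fintype.card ↥S = Fintype.card {v : W // ¬ (v = z)} :=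
          Fintype.card_congr (Equiv.refl _)
        rw [h1, Fintype.card_subtype_compl, Fintype.card_subtype_eq]
        rw [Nat.card_eq_fintype_card] at hcard
        omega
      have hcov' : ∀ A : ↥S, A ∈ q.support ∨ ∃ B ∈ q.support, (C.induce S).Adj A B := by
        intro A
        rcases hcov A.1 with h | ⟨b, hb, hab⟩
        · exact Or.inl ((mem_transfer hq A).mpr h)
        · exact Or.inr ⟨⟨b, hmemS b hb⟩, (mem_transfer hq _).mpr hb, hab⟩
      obtain ⟨g', hg'inj, hg'le, hg'w, hg'im⟩ :=
        ih (n - 1) (by omega) ↥S inferInstance (C.induce S) _ _ q hcardS hT' hqpath hcov'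
      set g : W → ℕ := fun v => if h : v = z then n - 1 else g' ⟨v, h⟩ with hgdef
      have hgval : ∀ A : ↥S, g A.1 = g' A := by
        intro A
        rw [hgdef]
        simp only [dif_neg A.2]
      have hwne : (w : W) ≠ z := fun h => hz (h ▸ p.start_mem_support)
      refine ⟨g, ?_, ?_, ?_, ?_⟩
      · intro v1 v2 h12
        by_cases h1 : v1 = z <;> by_cases h2 : v2 = z
        · rw [h1, h2]
        · exfalso
          rw [hgdef] at h12; simp only [dif_pos h1, dif_neg h2] at h12
          have := hg'le ⟨v2, h2⟩; omega
        · exfalso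
          rw [hgdef] at h12; simp only [dif_pos h2, dif_neg h1] at h12
          have := hg'le ⟨v1, h1⟩; omega
        · rw [hgdef] at h12; simp only [dif_neg h1, dif_neg h2] at h12
          exact congrArg Subtype.val (hg'inj h12)
      · intro v
        rw [hgdef]
        dsimp only
        split
        · exact le_refl _
        · next h => have := hg'le ⟨v, h⟩; omega
      · rw [hgdef]; simp only [dif_neg hwne]; exact hg'w
      · rw [edgeSet_split hwz.symm huniq, Set.image_union,
          image_edgeWt_map_val _ g g' hgval, hg'im, Set.image_singleton]
        have hz1 : g z = n - 1 := by simp [hgdef]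
        have hw0 : g w = 0 := by
          simp only [hgdef]; rw [dif_neg hwne]; exact hg'w
        have hwt : edgeWt g s(z, w) = n - 1 := by
          rw [edgeWt_mk, hz1, hw0]; omega
        rw [hwt]
        ext k
        simp only [Set.mem_union, Set.mem_Icc, Set.mem_singleton_iff]
        omega
    · -- Case B : all neighbours of w lie on the path
      push_neg at hleg
      cases p with
      | nil =>
        exfalso
        have hall : ∀ a : W, a = w := by
          intro a
          rcases hcov a with h | ⟨b, hb, hab⟩
          · simpa using h
          · have hbw : b = w := by simpa using hb
            subst hbw
            have := hleg a hab.symm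
            simpa using this
        have : Nat.card W = 1 := by
          rw [Nat.card_eq_one_iff_unique]
          exact ⟨⟨fun a b => (hall a).trans (hall b).symm⟩, ⟨w⟩⟩
        omega
      | @cons _ p1 _ hadj q =>
        have hqpath0 : q.IsPath ∧ w ∉ q.support := by
          rw [Walk.cons_isPath_iff] at hp; exact hp
        have huniqw : ∀ u, C.Adj w u → u = p1 := by
          intro u hu
          have husup : u ∈ (Walk.cons hadj q).support := hleg u hu
          have h1 := adj_start_mem_support_eq_snd hT _
            (by rw [Walk.cons_isPath_iff]; exact hqpath0) hu husup
          rw [Walk.support_cons, List.tail_cons, Walk.support_eq_cons q] at h1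
          simpa only [List.head?_cons, Option.some.injEq] using h1.symm
        set S : Set W := {v | v ≠ w} with hSdef
        have hT' : (C.induce S).IsTree :=
          induce_isTree_of_leaf hT hadj huniqw
        have hmemS : ∀ v ∈ q.support, v ∈ S := fun v hv hvw => hqpath0.2 (hvw ▸ hv)
        obtain ⟨q', hq'⟩ := walk_to_induce (G := C) q hmemS
        have hq'path : q'.IsPath := by
          rw [Walk.isPath_def]
          have := hqpath0.1.support_nodup
          rw [← hq'] at this
          exact this.of_map
        have hcardS : Nat.card ↥S = n - 1 := by
          rw [Nat.card_eq_fintype_card]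
          have h1 : Fintype.card ↥S = Fintype.card {v : W // ¬ (v = w)} :=
            Fintype.card_congr (Equiv.refl _)
          rw [h1, Fintype.card_subtype_compl, Fintype.card_subtype_eq]
          rw [Nat.card_eq_fintype_card] at hcard
          omega
        have hcov' : ∀ A : ↥S, A ∈ q'.support ∨ ∃ B ∈ q'.support, (C.induce S).Adj A B := by
          intro A
          rcases hcov A.1 with h | ⟨b, hb, hab⟩
          · rw [Walk.support_cons] at h
            rcases List.mem_cons.mp h with h | h
            · exact absurd h A.2
            · exact Or.inl ((mem_transfer hq' A).mpr h)
          · rw [Walk.support_cons] at hb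
            rcases List.mem_cons.mp hb with hbw | hbq
            · subst hbw
              have hA : A.1 = p1 := huniqw A.1 hab.symm
              refine Or.inl ((mem_transfer hq' A).mpr ?_)
              rw [hA]
              exact q.start_mem_support
            · exact Or.inr ⟨⟨b, hmemS b hbq⟩, (mem_transfer hq' _).mpr hbq, hab⟩
        obtain ⟨g', hg'inj, hg'le, hg'p1, hg'im⟩ :=
          ih (n - 1) (by omega) ↥S inferInstance (C.induce S) _ _ q' hcardS hT' hq'path hcov'
        set g : W → ℕ := fun v => if h : v = w then 0 else (n - 1) - g' ⟨v, h⟩ with hgdef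
        have hp1w : (p1 : W) ≠ w := hadj.ne'
        have hgval : ∀ A : ↥S, g A.1 = (n - 1) - g' A := by
          intro A; rw [hgdef]; simp only [dif_neg A.2]
        refine ⟨g, ?_, ?_, ?_, ?_⟩
        · intro v1 v2 h12
          by_cases h1 : v1 = w <;> by_cases h2 : v2 = w
          · rw [h1, h2]
          · exfalso
            rw [hgdef] at h12; simp only [dif_pos h1, dif_neg h2] at h12
            have := hg'le ⟨v2, h2⟩; omega
          · exfalso
            rw [hgdef] at h12; simp only [dif_pos h2, dif_neg h1] at h12
            have := hg'le ⟨v1, h1⟩; omega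
          · rw [hgdef] at h12; simp only [dif_neg h1, dif_neg h2] at h12
            have e1 := hg'le ⟨v1, h1⟩
            have e2 := hg'le ⟨v2, h2⟩
            have heq : g' ⟨v1, h1⟩ = g' ⟨v2, h2⟩ := by omega
            exact congrArg Subtype.val (hg'inj heq)
        · intro v
          rw [hgdef]
          dsimp only
          split
          · exact Nat.zero_le _
          · omega
        · simp [hgdef]
        · rw [edgeSet_split hadj huniqw, Set.image_union,
            Set.image_singleton]
          have him2 : edgeWt g '' (Sym2.map Subtype.val '' (C.induce S).edgeSet) =
              Set.Icc 1 (n - 1 - 1) := by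
            rw [← hg'im, Set.image_image]
            refine Set.image_congr' ?_
            intro e
            induction e with
            | _ A B =>
              rw [Sym2.map_pair_eq]
              simp only [edgeWt_mk, hgval]
              have := hg'le A; have := hg'le B
              omega
          rw [him2]
          have hw0 : g w = 0 := by simp [hgdef]
          have hp1v : g p1 = n - 1 := by
            have := hgval ⟨p1, hp1w⟩
            simp only [hg'p1] at this
            simpa using this
          have hwt : edgeWt g s(w, p1) = n - 1 := by
            rw [edgeWt_mk, hw0, hp1v]; omega
          rw [hwt]
          ext k
          simp only [Set.mem_union, Set.mem_Icc, Set.mem_singleton_iff]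
          omega

section part2
variable {V : Type} {G : SimpleGraph V}

lemma isPath_concat {a b : V} {p : G.Walk a b} {c : V} (hp : p.IsPath) (h : G.Adj b c)
    (hc : c ∉ p.support) : (p.concat h).IsPath := by
  rw [Walk.isPath_def, Walk.support_concat]
  rw [Walk.isPath_def] at hp
  simp [List.nodup_append, hp, hc]; exact fun x hx hxc => hc (hxc ▸ hx)

lemma tree_path_concat (hT : G.IsTree) (r0 : V)
    (P : ∀ v, G.Walk r0 v) (hP : ∀ v, (P v).IsPath)
    (hUn : ∀ v (q : G.Walk r0 v), q.IsPath → q = P v) :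
    ∀ a b (h : G.Adj a b), (P b) = (P a).concat h ∨ (P a) = (P b).concat h.symm := by
  classical
  intro a b h
  by_cases hb : b ∈ (P a).support
  · right
    have htake : (P a).takeUntil b hb = P b := hUn b _ ((hP a).takeUntil hb)
    have ha : a ∉ (P b).support := by
      intro ha
      rw [← htake] at ha
      have hnd := (hP a).support_nodup
      rw [← (P a).take_spec hb, Walk.support_append] at hnd
      have hmem2 : a ∈ ((P a).dropUntil b hb).support.tail := by
        have hend := ((P a).dropUntil b hb).end_mem_support
        rw [Walk.support_eq_cons] at hend
        rcases List.mem_cons.mp hend with h1 | h1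
        · exact absurd h1 h.ne
        · exact h1
      exact (List.disjoint_of_nodup_append hnd) ha hmem2
    exact (hUn a _ (isPath_concat (hP b) h.symm ha)).symm
  · left
    exact (hUn b _ (isPath_concat (hP a) h hb)).symm

end part2

section part3
variable {V : Type} {G : SimpleGraph V} {M : G.Subgraph}

lemma mk_eq_iff (hM : M.IsPerfectMatching) (a b : V) :
    Quot.mk (fun a b : V => a = b ∨ M.Adj a b) a =
      Quot.mk (fun a b : V => a = b ∨ M.Adj a b) b ↔ (a = b ∨ M.Adj a b) := by
  have hpm := SimpleGraph.Subgraph.isPerfectMatching_iff.mp hM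
  have hReq : Equivalence (fun a b : V => a = b ∨ M.Adj a b) := by
    refine ⟨fun a => Or.inl rfl, ?_, ?_⟩
    · rintro a b (rfl | h)
      · exact Or.inl rfl
      · exact Or.inr h.symm
    · rintro a b c (rfl | h1) h2
      · exact h2
      · rcases h2 with rfl | h2
        · exact Or.inr h1
        · exact Or.inl ((hpm b).unique h1.symm h2)
  exact ⟨fun h => hReq.eqvGen_iff.mp (Quot.eqvGen_exact h), fun h => Quot.sound h⟩

lemma card_quot [Fintype V] (hM : M.IsPerfectMatching) :
    Nat.card V = 2 * Nat.card (Quot (fun a b : V => a = b ∨ M.Adj a b)) := by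
  classical
  have hpm := SimpleGraph.Subgraph.isPerfectMatching_iff.mp hM
  set Q := Quot (fun a b : V => a = b ∨ M.Adj a b) with hQ
  let φ : V → V := fun v => (hpm v).choose
  have hφ : ∀ v, M.Adj v (φ v) := fun v => (hpm v).choose_spec.1
  have hφu : ∀ v w, M.Adj v w → w = φ v := fun v w h => (hpm v).choose_spec.2 w h
  have hφne : ∀ v, φ v ≠ v := fun v h => (M.adj_sub (hφ v)).ne' h
  have hmkφ : ∀ v : V, (Quot.mk _ (φ v) : Q) = Quot.mk _ v :=
    fun v => (mk_eq_iff hM _ _).mpr (Or.inr (hφ v).symm)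
  haveI : Finite Q := Finite.of_surjective (Quot.mk _) (fun q => Quot.exists_rep q)
  let σ : Q → V := fun q => (Quot.exists_rep q).choose
  have hσ : ∀ q : Q, Quot.mk _ (σ q) = q := fun q => (Quot.exists_rep q).choose_spec
  let ψ : Q × Bool → V := fun x => if x.2 then φ (σ x.1) else σ x.1
  have hmkψ : ∀ x : Q × Bool, (Quot.mk _ (ψ x) : Q) = x.1 := by
    rintro ⟨q, b⟩
    cases b
    · exact hσ q
    · show (Quot.mk _ (φ (σ q)) : Q) = q
      rw [hmkφ, hσ]
  have hbij : Function.Bijective ψ := by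
    constructor
    · rintro ⟨q1, b1⟩ ⟨q2, b2⟩ h12
      have hq : q1 = q2 := by
        have h := congrArg (Quot.mk (fun a b : V => a = b ∨ M.Adj a b)) h12
        rw [hmkψ ⟨q1, b1⟩, hmkψ ⟨q2, b2⟩] at h
        exact h
      subst hq
      cases b1 <;> cases b2
      · rfl
      · exact absurd h12.symm (hφne (σ q1))
      · exact absurd h12 (hφne (σ q1))
      · rfl
    · intro v
      have hv : Quot.mk _ (σ (Quot.mk _ v)) = (Quot.mk _ v : Q) := hσ _
      rcases (mk_eq_iff hM _ _).mp hv with heq | hadj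
      · exact ⟨⟨Quot.mk _ v, false⟩, heq⟩
      · refine ⟨⟨Quot.mk _ v, true⟩, ?_⟩
        show φ (σ (Quot.mk _ v)) = v
        exact (hφu _ _ hadj).symm
  have hcong := Nat.card_congr (Equiv.ofBijective ψ hbij)
  rw [Nat.card_prod, Nat.card_eq_fintype_card (α := Bool), Fintype.card_bool] at hcong
  omega
end part3

theorem stmt6 {V : Type} [Fintype V] (G : SimpleGraph V) (M : G.Subgraph)
    (hT : G.IsTree) (hE : Even (Nat.card V)) (hM : M.IsPerfectMatching)
    (hcat : IsKDistantTree (contree M) 1) :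
    ∃ f : V → ℕ, IsGracefulLabeling G f ∧
      ∀ a b : V, M.Adj a b → f a + f b = Nat.card V - 1 := by
  classical
  obtain ⟨hCT, u0, v0, p0, ⟨hp0, -⟩, hdist⟩ := hcat
  have hpm := SimpleGraph.Subgraph.isPerfectMatching_iff.mp hM
  haveI hfinQ : Finite (Quot (fun a b : V => a = b ∨ M.Adj a b)) :=
    Finite.of_surjective (Quot.mk _) (fun q => Quot.exists_rep q)
  haveI : Fintype (Quot (fun a b : V => a = b ∨ M.Adj a b)) := Fintype.ofFinite _
  have hneV : Nonempty V := hT.isConnected.nonempty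
  set mk : V → Quot (fun a b : V => a = b ∨ M.Adj a b) :=
    Quot.mk (fun a b : V => a = b ∨ M.Adj a b) with hmkdef
  set m := Nat.card (Quot (fun a b : V => a = b ∨ M.Adj a b)) with hm
  set n := Nat.card V with hn
  have hnm : n = 2 * m := card_quot hM
  have hmpos : 1 ≤ m := by
    have := Nat.card_pos (α := V)
    omega
  -- graceful labeling of the contree
  have hcov : ∀ a, a ∈ p0.support ∨ ∃ b ∈ p0.support, (contree M).Adj a b := by
    intro a
    obtain ⟨b, hb, hd⟩ := hdist a
    by_cases hab : a = b
    · left; exact hab ▸ hb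
    · right
      refine ⟨b, hb, ?_⟩
      have h0 : (contree M).dist a b ≠ 0 :=
        fun hh => hab (hCT.isConnected.dist_eq_zero_iff.mp hh)
      have h1 : (contree M).dist a b = 1 := by omega
      exact (SimpleGraph.dist_eq_one_iff_adj).mp h1
  obtain ⟨g, hginj, hgle, -, hgim⟩ :=
    graceful_of_cover m _ inferInstance (contree M) u0 v0 p0 hm.symm hCT hp0 hcov
  have hgsurj : ∀ t, t ≤ m - 1 → ∃ q, g q = t := by
    intro t ht
    have hcards : Fintype.card (Quot (fun a b : V => a = b ∨ M.Adj a b)) = m := by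
      rw [hm, Nat.card_eq_fintype_card]
    let g' : Quot (fun a b : V => a = b ∨ M.Adj a b) → Fin m :=
      fun q => ⟨g q, by have := hgle q; omega⟩
    have hbij : Function.Bijective g' := by
      rw [Fintype.bijective_iff_injective_and_card]
      constructor
      · intro a b hab
        exact hginj (congrArg Fin.val hab)
      · rw [Fintype.card_fin, hcards]
    obtain ⟨q, hq⟩ := hbij.2 ⟨t, by omega⟩
    exact ⟨q, congrArg Fin.val hq⟩
  -- the matching partner
  let φ : V → V := fun v => (hpm v).choose
  have hφ : ∀ v, M.Adj v (φ v) := fun v => (hpm v).choose_spec.1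
  have hmkφ : ∀ v : V, mk (φ v) = mk v :=
    fun v => (mk_eq_iff hM _ _).mpr (Or.inr (hφ v).symm)
  -- root paths and parity colouring
  let r0 : V := Classical.arbitrary V
  let P : ∀ v, G.Walk r0 v := fun v => (hT.existsUnique_path r0 v).choose
  have hP : ∀ v, (P v).IsPath := fun v => (hT.existsUnique_path r0 v).choose_spec.1
  have hUn : ∀ (v : V) (q : G.Walk r0 v), q.IsPath → q = P v :=
    fun v q hq => (hT.existsUnique_path r0 v).choose_spec.2 q hq
  let cnt : V → ℕ := fun v => (P v).edges.countP (fun e => decide (e ∈ M.edgeSet))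
  have hflip : ∀ a b, G.Adj a b → ((Even (cnt a) ↔ Even (cnt b)) ↔ ¬ M.Adj a b) := by
    have key : ∀ x y (hxy : G.Adj x y), P y = (P x).concat hxy →
        ((Even (cnt x) ↔ Even (cnt y)) ↔ ¬ M.Adj x y) := by
      intro x y hxy hconcat
      have hcnt : cnt y = cnt x + (if M.Adj x y then 1 else 0) := by
        show (P y).edges.countP _ = _
        rw [hconcat, Walk.edges_concat, List.concat_eq_append, List.countP_append]
        congr 1
        by_cases hm' : M.Adj x y
        · simp [hm', SimpleGraph.Subgraph.mem_edgeSet, List.countP_cons]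
        · simp [hm', SimpleGraph.Subgraph.mem_edgeSet, List.countP_cons]
      rw [hcnt]
      by_cases hm' : M.Adj x y
      · rw [if_pos hm']
        constructor
        · intro hiff
          exact (iff_not_self (hiff.trans Nat.even_add_one)).elim
        · intro h
          exact absurd hm' h
      · rw [if_neg hm', add_zero]
        exact iff_of_true Iff.rfl hm'
    intro a b h
    rcases tree_path_concat hT r0 P hP hUn a b h with hc | hc
    · exact key a b h hc
    · have h2 := key b a h.symm hc
      constructor
      · intro hiff hadj
        exact (h2.mp hiff.symm) hadj.symm
      · intro hnadj
        exact (h2.mpr (fun hadj => hnadj hadj.symm)).symm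
  -- the labeling
  set f : V → ℕ := fun v => if Even (cnt v) then 2 * g (mk v) else (n - 1) - 2 * g (mk v)
    with hf
  have hfE : ∀ v, Even (cnt v) → f v = 2 * g (mk v) := by
    intro v hv; simp only [hf]; rw [if_pos hv]
  have hfO : ∀ v, ¬ Even (cnt v) → f v = (n - 1) - 2 * g (mk v) := by
    intro v hv; simp only [hf]; rw [if_neg hv]
  have hgle2 : ∀ v : V, 2 * g (mk v) ≤ n - 2 := by
    intro v; have := hgle (mk v); omega
  -- edge count of G
  haveI : Fintype G.edgeSet := Fintype.ofFinite _
  have hEcard : G.edgeSet.ncard = n - 1 := by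
    have h1 := hT.card_edgeFinset
    have h2 : G.edgeSet.ncard = G.edgeFinset.card := by
      rw [Set.ncard_eq_toFinset_card']; congr 1
    rw [hn, Nat.card_eq_fintype_card]
    omega
  -- injectivity
  have hinj : Function.Injective f := by
    intro v1 v2 h12
    have hsame : Even (cnt v1) ↔ Even (cnt v2) := by
      by_cases e1 : Even (cnt v1) <;> by_cases e2 : Even (cnt v2)
      · exact iff_of_true e1 e2
      · exfalso
        rw [hfE v1 e1, hfO v2 e2] at h12
        have := hgle2 v1; have := hgle2 v2
        rw [Nat.even_iff] at e1
        rw [Nat.even_iff] at e2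
        omega
      · exfalso
        rw [hfO v1 e1, hfE v2 e2] at h12
        have := hgle2 v1; have := hgle2 v2
        rw [Nat.even_iff] at e1
        rw [Nat.even_iff] at e2
        omega
      · exact iff_of_false e1 e2
    have hgeq : g (mk v1) = g (mk v2) := by
      by_cases e1 : Even (cnt v1)
      · have e2 := hsame.mp e1
        rw [hfE v1 e1, hfE v2 e2] at h12
        omega
      · have e2 := fun h => e1 (hsame.mpr h)
        rw [hfO v1 e1, hfO v2 e2] at h12
        have := hgle2 v1; have := hgle2 v2
        omega
    have hmk : mk v1 = mk v2 := hginj hgeq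
    rcases (mk_eq_iff hM v1 v2).mp hmk with h | h
    · exact h
    · exact absurd h (((hflip v1 v2 (M.adj_sub h)).mp hsame))
  -- matching sum
  have hsum : ∀ a b : V, M.Adj a b → f a + f b = n - 1 := by
    intro a b hab
    have hmk : mk a = mk b := (mk_eq_iff hM a b).mpr (Or.inr hab)
    have hne : ¬ (Even (cnt a) ↔ Even (cnt b)) :=
      fun hiff => (hflip a b (M.adj_sub hab)).mp hiff hab
    have hA := hgle2 a
    by_cases e1 : Even (cnt a)
    · have e2 : ¬ Even (cnt b) := fun h => hne (iff_of_true e1 h)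
      rw [hfE a e1, hfO b e2, ← hmk]
      omega
    · have e2 : Even (cnt b) := by
        by_contra h
        exact hne (iff_of_false e1 h)
      rw [hfO a e1, hfE b e2, ← hmk]
      omega
  -- the image of the edge weights
  have himg : edgeWt f '' G.edgeSet = Set.Icc 1 (n - 1) := by
    apply Set.eq_of_subset_of_subset
    · rintro k ⟨e, he, rfl⟩
      induction e with
      | _ a b =>
        have hab : G.Adj a b := he
        rw [Set.mem_Icc, edgeWt_mk]
        by_cases hm' : M.Adj a b
        · have hmk : mk a = mk b := (mk_eq_iff hM a b).mpr (Or.inr hm')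
          have hne : ¬ (Even (cnt a) ↔ Even (cnt b)) :=
            fun hiff => (hflip a b hab).mp hiff hm'
          have hA := hgle2 a
          by_cases e1 : Even (cnt a)
          · have e2 : ¬ Even (cnt b) := fun h => hne (iff_of_true e1 h)
            rw [hfE a e1, hfO b e2, ← hmk]
            omega
          · have e2 : Even (cnt b) := by
              by_contra h; exact hne (iff_of_false e1 h)
            rw [hfO a e1, hfE b e2, ← hmk]
            omega
        · have hmkne : mk a ≠ mk b := by
            intro hmk
            rcases (mk_eq_iff hM a b).mp hmk with h | h
            · exact hab.ne h
            · exact hm' h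
          have hCTadj : (contree M).Adj (mk a) (mk b) := by
            refine (SimpleGraph.fromRel_adj _ _ _).mpr ⟨hmkne, Or.inl ⟨a, b, rfl, rfl, hab⟩⟩
          have hw : edgeWt g s(mk a, mk b) ∈ Set.Icc 1 (m - 1) := by
            rw [← hgim]
            exact Set.mem_image_of_mem _ hCTadj
          rw [Set.mem_Icc, edgeWt_mk] at hw
          have hiff := (hflip a b hab).mpr hm'
          have hA := hgle2 a; have hB := hgle2 b
          by_cases e1 : Even (cnt a)
          · have e2 := hiff.mp e1
            rw [hfE a e1, hfE b e2]
            omega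
          · have e2 := fun h => e1 (hiff.mpr h)
            rw [hfO a e1, hfO b e2]
            omega
    · intro k hk
      rw [Set.mem_Icc] at hk
      by_cases hke : Even k
      · rw [Nat.even_iff] at hke
        have hj : k / 2 ∈ Set.Icc 1 (m - 1) := by
          rw [Set.mem_Icc]; omega
        rw [← hgim] at hj
        obtain ⟨e, hee, hwe⟩ := hj
        revert hee hwe
        induction e with
        | _ X Y =>
          intro hee hwe
          have hXY : (contree M).Adj X Y := hee
          obtain ⟨hneXY, hrel⟩ := (SimpleGraph.fromRel_adj _ _ _).mp hXY
          have hmain : ∀ a b : V, mk a = X → mk b = Y → G.Adj a b →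
              ∃ e ∈ G.edgeSet, edgeWt f e = k := by
            intro a b ha hb hab
            have hm' : ¬ M.Adj a b := by
              intro h
              exact hneXY (by rw [← ha, ← hb]; exact (mk_eq_iff hM a b).mpr (Or.inr h))
            have hiff := (hflip a b hab).mpr hm'
            have hA := hgle2 a; have hB := hgle2 b
            rw [edgeWt_mk] at hwe
            rw [← ha, ← hb] at hwe
            refine ⟨s(a, b), hab, ?_⟩
            rw [edgeWt_mk]
            by_cases e1 : Even (cnt a)
            · have e2 := hiff.mp e1
              rw [hfE a e1, hfE b e2]
              omega
            · have e2 := fun h => e1 (hiff.mpr h)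
              rw [hfO a e1, hfO b e2]
              omega
          rcases hrel with ⟨a, b, ha, hb, hab⟩ | ⟨a, b, ha, hb, hab⟩
          · exact hmain a b ha hb hab
          · obtain ⟨e, h1, h2⟩ := hmain b a hb ha hab.symm
            exact ⟨e, h1, h2⟩
      · rw [Nat.even_iff] at hke
        have hex : ∃ t, t ≤ m - 1 ∧ (4 * t + k = 2 * m - 1 ∨ 4 * t = 2 * m - 1 + k) := by
          by_cases hc : (2 * m - 1 - k) % 4 = 0
          · exact ⟨(2 * m - 1 - k) / 4, by omega, Or.inl (by omega)⟩
          · exact ⟨(2 * m - 1 + k) / 4, by omega, Or.inr (by omega)⟩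
        obtain ⟨t, ht, htk⟩ := hex
        obtain ⟨q, hq⟩ := hgsurj t ht
        obtain ⟨a, ha⟩ := Quot.exists_rep q
        have hmka : mk a = q := ha
        have hadj : G.Adj a (φ a) := M.adj_sub (hφ a)
        have hga : g (mk a) = t := by rw [hmka, hq]
        have hgb : g (mk (φ a)) = t := by rw [hmkφ a, hmka, hq]
        have hne : ¬ (Even (cnt a) ↔ Even (cnt (φ a))) :=
          fun hiff => (hflip a (φ a) hadj).mp hiff (hφ a)
        refine ⟨s(a, φ a), hadj, ?_⟩
        rw [edgeWt_mk]
        by_cases e1 : Even (cnt a)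
        · have e2 : ¬ Even (cnt (φ a)) := fun h => hne (iff_of_true e1 h)
          rw [hfE a e1, hfO (φ a) e2, hga, hgb]
          omega
        · have e2 : Even (cnt (φ a)) := by
            by_contra h; exact hne (iff_of_false e1 h)
          rw [hfO a e1, hfE (φ a) e2, hga, hgb]
          omega
  exact ⟨f, ⟨hinj, fun v => by
      rw [hEcard]
      by_cases e1 : Even (cnt v)
      · rw [hfE v e1]; have := hgle2 v; omega
      · rw [hfO v e1]; omega, by rw [hEcard]; exact himg⟩, hsum⟩
end treelem
end

section
/- Every lobster that contains a perfect matching admits a graceful labeling. -/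
open SimpleGraph

namespace SweepCore

/-- Side assignment for the sweep tree: vertex `j`'s side is opposite to its parent's. -/
def sweepSide (par : ℕ → ℕ) : ℕ → Bool
  | 0 => false
  | j+1 => !(sweepSide par (min (par (j+1)) j))
termination_by j => j
decreasing_by omega

lemma sweepSide_eq (par : ℕ → ℕ) (j : ℕ) (h1 : 1 ≤ j) (h : par j < j) :
    sweepSide par j = !(sweepSide par (par j)) := by
  obtain ⟨j', rfl⟩ : ∃ j', j = j' + 1 := ⟨j - 1, by omega⟩
  rw [show sweepSide par (j'+1) = !(sweepSide par (min (par (j'+1)) j')) from by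
    conv_lhs => rw [sweepSide]]
  rw [min_eq_left (by omega)]

/-- rank of `j`: number of earlier vertices on the same side. -/
def rank (par : ℕ → ℕ) (j : ℕ) : ℕ :=
  ((Finset.range j).filter (fun i => sweepSide par i = sweepSide par j)).card

section
variable (par : ℕ → ℕ) (k : ℕ)
variable (hpar : ∀ j, 1 ≤ j → j < k → par j < j)
variable (hsweep : ∀ j, 2 ≤ j → j < k → par j = par (j-1) ∨ par j = j-1)

include hpar hsweep in
lemma gap : ∀ j, 1 ≤ j → j < k → ∀ i, par j < i → i < j →
    sweepSide par i = sweepSide par j := by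
  intro j
  induction j using Nat.strong_induction_on with
  | _ j IH =>
    intro hj1 hjk i hpi hij
    have hplt : par j < j := hpar j hj1 hjk
    rcases Nat.lt_or_ge j 2 with hj2 | hj2
    · omega
    · rcases hsweep j hj2 hjk with hcase | hcase
      · -- par j = par (j-1)
        have hj1' : 1 ≤ j - 1 := by omega
        have hplt' : par (j-1) < j - 1 := hpar (j-1) hj1' (by omega)
        have hsj : sweepSide par j = !(sweepSide par (par j)) :=
          sweepSide_eq par j hj1 hplt
        have hsj1 : sweepSide par (j-1) = !(sweepSide par (par (j-1))) :=
          sweepSide_eq par (j-1) hj1' hplt'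
        have heq : sweepSide par (j-1) = sweepSide par j := by
          rw [hsj, hsj1, hcase]
        rcases Nat.lt_or_ge i (j-1) with hi' | hi'
        · have := IH (j-1) (by omega) hj1' (by omega) i (by omega) hi'
          rw [this, heq]
        · have : i = j - 1 := by omega
          rw [this, heq]
      · omega

include hpar hsweep in
lemma rank_sum : ∀ j, 1 ≤ j → j < k → rank par j + rank par (par j) + 1 = j := by
  intro j hj1 hjk
  have hplt : par j < j := hpar j hj1 hjk
  have hside : sweepSide par j = !(sweepSide par (par j)) := sweepSide_eq par j hj1 hplt
  have hT : (Finset.range j).filter (fun i => ¬(sweepSide par i = sweepSide par j))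
      = insert (par j) ((Finset.range (par j)).filter
          (fun i => sweepSide par i = sweepSide par (par j))) := by
    ext i
    simp only [Finset.mem_filter, Finset.mem_range, Finset.mem_insert]
    constructor
    · rintro ⟨hi, hs⟩
      rcases Nat.lt_trichotomy i (par j) with h | h | h
      · refine Or.inr ⟨h, ?_⟩
        revert hs
        rw [hside]
        cases sweepSide par i <;> cases sweepSide par (par j) <;> simp
      · exact Or.inl h
      · exfalso
        exact hs (gap par k hpar hsweep j hj1 hjk i h hi)
    · rintro (rfl | ⟨h, hs⟩)
      · refine ⟨hplt, ?_⟩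
        rw [hside]
        cases sweepSide par (par j) <;> simp
      · refine ⟨by omega, ?_⟩
        rw [hside, hs]
        cases sweepSide par (par j) <;> simp
  have hTcard : ((Finset.range j).filter
      (fun i => ¬(sweepSide par i = sweepSide par j))).card = rank par (par j) + 1 := by
    rw [hT, Finset.card_insert_of_notMem (by simp)]
    rfl
  have hsplit : rank par j +
      ((Finset.range j).filter (fun i => ¬(sweepSide par i = sweepSide par j))).card = j := by
    have h := Finset.card_filter_add_card_filter_not
      (s := Finset.range j) (p := fun i => sweepSide par i = sweepSide par j)
    rw [Finset.card_range] at h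
    exact h
  omega

lemma rank_lt_self (j : ℕ) : rank par j ≤ j := by
  unfold rank
  calc _ ≤ (Finset.range j).card := Finset.card_filter_le _ _
  _ = j := Finset.card_range j

include hpar in
lemma rank_strict {i i' : ℕ} (hii : i < i') (hs : sweepSide par i = sweepSide par i') :
    rank par i < rank par i' := by
  unfold rank
  have hsub : insert i ((Finset.range i).filter (fun t => sweepSide par t = sweepSide par i))
      ⊆ (Finset.range i').filter (fun t => sweepSide par t = sweepSide par i') := by
    intro t ht
    simp only [Finset.mem_insert, Finset.mem_filter, Finset.mem_range] at ht ⊢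
    rcases ht with rfl | ⟨h1, h2⟩
    · exact ⟨hii, hs⟩
    · exact ⟨by omega, by rw [h2, hs]⟩
  have := Finset.card_le_card hsub
  rw [Finset.card_insert_of_notMem (by simp)] at this
  omega

/-- The final labels. -/
def lab (par : ℕ → ℕ) (k : ℕ) (i : ℕ) : ℕ :=
  if sweepSide par i then k - 1 - rank par i else rank par i

include hpar in
lemma lab_lt (i : ℕ) (hi : i < k) (hk : 1 ≤ k) : lab par k i < k := by
  unfold lab
  have := rank_lt_self par i
  split <;> omega

-- count of false-side vertices in range k
include hpar in
lemma lab_false_lt_lab_true {i i' : ℕ} (hi : i < k) (hi' : i' < k)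
    (hsi : sweepSide par i = false) (hsi' : sweepSide par i' = true) :
    lab par k i < lab par k i' := by
  -- lab i = rank i ≤ (#false in range k) - 1 ; lab i' = k-1-rank i' ≥ k - #true = #false
  set cF := ((Finset.range k).filter (fun t => sweepSide par t = false)).card with hcF
  set cT := ((Finset.range k).filter (fun t => ¬(sweepSide par t = false))).card with hcT
  have hsplit : cF + cT = k := by
    have h := Finset.card_filter_add_card_filter_not
      (s := Finset.range k) (p := fun t => sweepSide par t = false)
    rw [Finset.card_range] at h
    exact h
  have h1 : rank par i < cF := by
    unfold rank
    rw [hcF]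
    have hsub : insert i ((Finset.range i).filter (fun t => sweepSide par t = sweepSide par i))
        ⊆ (Finset.range k).filter (fun t => sweepSide par t = false) := by
      intro t ht
      simp only [Finset.mem_insert, Finset.mem_filter, Finset.mem_range] at ht ⊢
      rcases ht with rfl | ⟨ha, hb⟩
      · exact ⟨hi, hsi⟩
      · exact ⟨by omega, by rw [hb, hsi]⟩
    have := Finset.card_le_card hsub
    rw [Finset.card_insert_of_notMem (by simp)] at this
    omega
  have h2 : rank par i' < cT := by
    unfold rank
    rw [hcT]
    have hsub : insert i' ((Finset.range i').filter (fun t => sweepSide par t = sweepSide par i'))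
        ⊆ (Finset.range k).filter (fun t => ¬(sweepSide par t = false)) := by
      intro t ht
      simp only [Finset.mem_insert, Finset.mem_filter, Finset.mem_range] at ht ⊢
      rcases ht with rfl | ⟨ha, hb⟩
      · exact ⟨hi', by simp [hsi']⟩
      · refine ⟨by omega, by rw [hb, hsi']; simp⟩
    have := Finset.card_le_card hsub
    rw [Finset.card_insert_of_notMem (by simp)] at this
    omega
  unfold lab
  rw [hsi, hsi']
  simp only [Bool.false_eq_true, if_false, if_true]
  omega

include hpar in
lemma lab_inj {i i' : ℕ} (hi : i < k) (hi' : i' < k) (heq : lab par k i = lab par k i') :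
    i = i' := by
  by_contra hne
  rcases hsi : sweepSide par i with _ | _ <;> rcases hsi' : sweepSide par i' with _ | _
  · -- both false
    rcases Nat.lt_or_ge i i' with h | h
    · have := rank_strict par k hpar h (by rw [hsi, hsi'])
      unfold lab at heq
      rw [hsi, hsi'] at heq
      simp at heq
      omega
    · have hlt : i' < i := by omega
      have := rank_strict par k hpar hlt (by rw [hsi, hsi'])
      unfold lab at heq
      rw [hsi, hsi'] at heq
      simp at heq
      omega
  · exact absurd heq (Nat.ne_of_lt (lab_false_lt_lab_true par k hpar hi hi' hsi hsi'))
  · exact absurd heq.symm (Nat.ne_of_lt (lab_false_lt_lab_true par k hpar hi' hi hsi' hsi))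
  · -- both true
    have hb : rank par i ≤ i := rank_lt_self par i
    have hb' : rank par i' ≤ i' := rank_lt_self par i'
    rcases Nat.lt_or_ge i i' with h | h
    · have := rank_strict par k hpar h (by rw [hsi, hsi'])
      unfold lab at heq
      rw [hsi, hsi'] at heq
      simp at heq
      omega
    · have hlt : i' < i := by omega
      have := rank_strict par k hpar hlt (by rw [hsi, hsi'])
      unfold lab at heq
      rw [hsi, hsi'] at heq
      simp at heq
      omega

include hpar hsweep in
lemma lab_weight (j : ℕ) (hj1 : 1 ≤ j) (hjk : j < k) :
    ((lab par k j : ℤ) - lab par k (par j)).natAbs = k - j := by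
  have hplt : par j < j := hpar j hj1 hjk
  have hside : sweepSide par j = !(sweepSide par (par j)) := sweepSide_eq par j hj1 hplt
  have hsum := rank_sum par k hpar hsweep j hj1 hjk
  have hb : rank par j ≤ j := rank_lt_self par j
  have hb' : rank par (par j) ≤ par j := rank_lt_self par (par j)
  unfold lab
  rcases hsp : sweepSide par (par j) with _ | _ <;>
    rw [hsp] at hside <;> simp only [Bool.not_false, Bool.not_true] at hside <;>
    simp only [hside, hsp] <;> simp <;> omega

include hpar in
lemma lab_surj (hk : 1 ≤ k) (c : ℕ) (hc : c < k) : ∃ i, i < k ∧ lab par k i = c := by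
  have himg : (Finset.range k).image (lab par k) = Finset.range k := by
    apply Finset.eq_of_subset_of_card_le
    · intro x hx
      simp only [Finset.mem_image, Finset.mem_range] at hx ⊢
      obtain ⟨i, hi, rfl⟩ := hx
      exact lab_lt par k hpar i hi hk
    · rw [Finset.card_image_of_injOn, Finset.card_range]
      intro i hi i' hi' h
      exact lab_inj par k hpar (Finset.mem_range.mp hi) (Finset.mem_range.mp hi') h
  have : c ∈ (Finset.range k).image (lab par k) := by rw [himg]; exact Finset.mem_range.mpr hc
  simp only [Finset.mem_image, Finset.mem_range] at this
  obtain ⟨i, hi, h⟩ := this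
  exact ⟨i, hi, h⟩
end

/-- Main Phase 1 lemma: a sweep parent structure admits a graceful-style labeling. -/
lemma sweep_label (k : ℕ) (hk : 1 ≤ k) (par : ℕ → ℕ)
    (hpar : ∀ j, 1 ≤ j → j < k → par j < j)
    (hsweep : ∀ j, 2 ≤ j → j < k → par j = par (j-1) ∨ par j = j-1) :
    ∃ f : ℕ → ℕ, (∀ i, i < k → f i < k) ∧
      (∀ i i', i < k → i' < k → f i = f i' → i = i') ∧
      (∀ c, c < k → ∃ i, i < k ∧ f i = c) ∧
      (∀ j, 1 ≤ j → j < k → ((f j : ℤ) - f (par j)).natAbs = k - j) := by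
  exact ⟨lab par k, fun i hi => lab_lt par k hpar i hi hk,
    fun i i' hi hi' h => lab_inj par k hpar hi hi' h,
    fun c hc => lab_surj par k hpar hk c hc,
    fun j h1 h2 => lab_weight par k hpar hsweep j h1 h2⟩

end SweepCore

namespace LobsterProof

/-- A pair model: the tree decomposed into matched pairs forming a sweep caterpillar. -/
structure PairModel {V : Type*} (G : SimpleGraph V) where
  k : ℕ
  hk : 1 ≤ k
  φ : ℕ → Bool → V
  par : ℕ → ℕ
  sa : ℕ → Bool
  sb : ℕ → Bool
  inj : ∀ i s i' s', i < k → i' < k → φ i s = φ i' s' → i = i' ∧ s = s'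
  cover : ∀ v : V, ∃ i s, i < k ∧ φ i s = v
  par_lt : ∀ j, 1 ≤ j → j < k → par j < j
  sweep : ∀ j, 2 ≤ j → j < k → par j = par (j-1) ∨ par j = j-1
  medge : ∀ i, i < k → G.Adj (φ i false) (φ i true)
  cedge : ∀ j, 1 ≤ j → j < k → G.Adj (φ j (sa j)) (φ (par j) (sb j))
  edges : ∀ e ∈ G.edgeSet, (∃ i, i < k ∧ e = s(φ i false, φ i true)) ∨
      (∃ j, 1 ≤ j ∧ j < k ∧ e = s(φ j (sa j), φ (par j) (sb j)))

/-- Orientation choice for each pair. -/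
def orient (par : ℕ → ℕ) (sa sb : ℕ → Bool) : ℕ → Bool
  | 0 => false
  | j+1 => if sb (j+1) = orient par sa sb (min (par (j+1)) j) then sa (j+1) else !(sa (j+1))
termination_by j => j
decreasing_by omega

lemma orient_spec (par : ℕ → ℕ) (sa sb : ℕ → Bool) (j : ℕ) (h1 : 1 ≤ j) (h : par j < j) :
    ((sa j = orient par sa sb j) ↔ (sb j = orient par sa sb (par j))) := by
  obtain ⟨j', rfl⟩ : ∃ j', j = j' + 1 := ⟨j - 1, by omega⟩
  rw [show orient par sa sb (j'+1)
      = if sb (j'+1) = orient par sa sb (min (par (j'+1)) j') then sa (j'+1) else !(sa (j'+1))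
    from by conv_lhs => rw [orient]]
  rw [min_eq_left (by omega)]
  by_cases hb : sb (j'+1) = orient par sa sb (par (j'+1))
  · simp [hb]
  · simp only [hb, if_false, iff_false]
    cases sa (j'+1) <;> simp

theorem pairModel_graceful {V : Type*} [Fintype V] (G : SimpleGraph V) (m : PairModel G) :
    IsGraceful G := by
  classical
  obtain ⟨k, hk, φ, par, sa, sb, inj, cover, par_lt, sweep, medge, cedge, edges⟩ := m
  obtain ⟨f, hflt, hfinj, hfsurj, hfwt⟩ := SweepCore.sweep_label k hk par par_lt sweep
  set σ : ℕ → Bool := orient par sa sb with hσ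
  -- choose index functions
  choose I S hIlt hIS using cover
  have hIdx : ∀ i s, i < k → I (φ i s) = i ∧ S (φ i s) = s := by
    intro i s hi
    obtain ⟨h1, h2⟩ := inj (I (φ i s)) (S (φ i s)) i s (hIlt _) hi (hIS _)
    exact ⟨h1, h2⟩
  set F : V → ℕ := fun v => if S v = σ (I v) then 2 * f (I v) else 2*k - 1 - 2 * f (I v)
    with hF
  have hFφ : ∀ i s, i < k →
      F (φ i s) = if s = σ i then 2 * f i else 2*k - 1 - 2 * f i := by
    intro i s hi
    rw [hF]
    simp only [(hIdx i s hi).1, (hIdx i s hi).2]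
  -- the edge finset
  set mE : ℕ → Sym2 V := fun i => s(φ i false, φ i true) with hmE
  set cE : ℕ → Sym2 V := fun j => s(φ j (sa j), φ (par j) (sb j)) with hcE
  set E : Finset (Sym2 V) :=
    ((Finset.range k).image mE) ∪ ((Finset.Ico 1 k).image cE) with hE
  have hEdgeSet : G.edgeSet = ↑E := by
    ext e
    constructor
    · intro he
      rcases edges e he with ⟨i, hi, rfl⟩ | ⟨j, hj1, hjk, rfl⟩
      · simp only [hE, Finset.coe_union, Set.mem_union, Finset.coe_image, Set.mem_image,
          Finset.mem_coe, Finset.mem_range]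
        exact Or.inl ⟨i, hi, rfl⟩
      · simp only [hE, Finset.coe_union, Set.mem_union, Finset.coe_image, Set.mem_image,
          Finset.mem_coe, Finset.mem_Ico]
        exact Or.inr ⟨j, ⟨hj1, hjk⟩, rfl⟩
    · intro he
      simp only [hE, Finset.coe_union, Set.mem_union, Finset.coe_image, Set.mem_image,
        Finset.mem_coe, Finset.mem_range, Finset.mem_Ico] at he
      rcases he with ⟨i, hi, rfl⟩ | ⟨j, ⟨hj1, hjk⟩, rfl⟩
      · exact (medge i hi)
      · exact (cedge j hj1 hjk)
  -- cardinality
  have hmE_inj : Set.InjOn mE (Finset.range k) := by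
    intro i hi i' hi' h
    simp only [Finset.coe_range, Set.mem_Iio] at hi hi'
    rw [hmE] at h
    simp only [Sym2.eq, Sym2.rel_iff', Prod.mk.injEq, Prod.swap_prod_mk] at h
    rcases h with ⟨h1, _⟩ | ⟨h1, _⟩
    · exact (inj i false i' false hi hi' h1).1
    · exact (inj i false i' true hi hi' h1).1
  have hcE_inj : Set.InjOn cE (Finset.Ico 1 k) := by
    intro j hj j' hj' h
    simp only [Finset.coe_Ico, Set.mem_Ico] at hj hj'
    rw [hcE] at h
    simp only [Sym2.eq, Sym2.rel_iff', Prod.mk.injEq, Prod.swap_prod_mk] at h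
    rcases h with ⟨h1, _⟩ | ⟨h1, h2⟩
    · exact (inj j (sa j) j' (sa j') hj.2 hj'.2 h1).1
    · have e1 := (inj j (sa j) (par j') (sb j') hj.2
        (lt_trans (par_lt j' hj'.1 hj'.2) hj'.2) h1).1
      have e2 := (inj (par j) (sb j) j' (sa j') (lt_trans (par_lt j hj.1 hj.2) hj.2)
        hj'.2 h2).1
      have := par_lt j hj.1 hj.2
      have := par_lt j' hj'.1 hj'.2
      omega
  have hdisj : Disjoint ((Finset.range k).image mE) ((Finset.Ico 1 k).image cE) := by
    rw [Finset.disjoint_left]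
    intro e he1 he2
    simp only [Finset.mem_image, Finset.mem_range, Finset.mem_Ico] at he1 he2
    obtain ⟨i, hi, rfl⟩ := he1
    obtain ⟨j, ⟨hj1, hjk⟩, h⟩ := he2
    rw [hmE, hcE] at h
    simp only [Sym2.eq, Sym2.rel_iff', Prod.mk.injEq, Prod.swap_prod_mk] at h
    have hpj := par_lt j hj1 hjk
    rcases h with ⟨h1, h2⟩ | ⟨h1, h2⟩
    · have e1 := (inj j (sa j) i false hjk hi h1).1
      have e2 := (inj (par j) (sb j) i true (by omega) hi h2).1
      omega
    · have e1 := (inj j (sa j) i true hjk hi h1).1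
      have e2 := (inj (par j) (sb j) i false (by omega) hi h2).1
      omega
  have hcard : E.card = 2 * k - 1 := by
    rw [hE, Finset.card_union_of_disjoint hdisj,
      Finset.card_image_of_injOn hmE_inj, Finset.card_image_of_injOn hcE_inj,
      Finset.card_range, Nat.card_Ico]
    omega
  have hncard : G.edgeSet.ncard = 2 * k - 1 := by
    rw [hEdgeSet, Set.ncard_coe_finset, hcard]
  -- weights of the two kinds of edges
  have hwtM : ∀ i, i < k → edgeWt F (mE i) = ((4 * (f i) : ℤ) - (2*k - 1)).natAbs := by
    intro i hi
    rw [hmE]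
    simp only [edgeWt, Sym2.lift_mk]
    rw [hFφ i false hi, hFφ i true hi]
    have hfi := hflt i hi
    rcases hoi : σ i with _ | _ <;> simp only [hoi] <;> simp <;> omega
  have hwtC : ∀ j, 1 ≤ j → j < k → edgeWt F (cE j) = 2 * (k - j) := by
    intro j hj1 hjk
    have hpj := par_lt j hj1 hjk
    rw [hcE]
    simp only [edgeWt, Sym2.lift_mk]
    rw [hFφ j (sa j) hjk, hFφ (par j) (sb j) (by omega)]
    have hwt := hfwt j hj1 hjk
    have hfj := hflt j hjk
    have hfp := hflt (par j) (by omega)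
    have hiff := orient_spec par sa sb j hj1 hpj
    by_cases ha : sa j = σ j
    · have hb : sb j = σ (par j) := hiff.mp ha
      simp only [ha, hb, if_true]
      omega
    · have hb : ¬ (sb j = σ (par j)) := fun hb => ha (hiff.mpr hb)
      simp only [ha, hb, if_false]
      omega
  refine ⟨F, ?_, ?_, ?_⟩
  · -- injective
    intro u v huv
    have hu := hIS u
    have hv := hIS v
    rw [hF] at huv
    simp only at huv
    have hIu := hIlt u
    have hIv := hIlt v
    have hfu := hflt (I u) hIu
    have hfv := hflt (I v) hIv
    by_cases h1 : S u = σ (I u) <;> by_cases h2 : S v = σ (I v) <;>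
      simp only [h1, h2, if_true, if_false] at huv
    · have : I u = I v := hfinj _ _ hIu hIv (by omega)
      rw [← hu, ← hv, this, h1, h2, this]
    · omega
    · omega
    · have hIeq : I u = I v := hfinj _ _ hIu hIv (by omega)
      have h1' : ¬ (S u = σ (I v)) := by rw [← hIeq]; exact h1
      have hSS : S u = S v := by
        rcases hb : σ (I v) with _|_ <;> rw [hb] at h1' h2
        · simp only [Bool.not_eq_false] at h1' h2
          rw [h1', h2]
        · simp only [Bool.not_eq_true] at h1' h2
          rw [h1', h2]
      rw [← hu, ← hv, hIeq, hSS]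
  · -- bound
    intro v
    rw [hncard, hF]
    have := hflt (I v) (hIlt v)
    dsimp only
    split <;> omega
  · -- weights image
    rw [hncard, hEdgeSet]
    ext w
    simp only [Set.mem_image, Finset.mem_coe, Set.mem_Icc]
    constructor
    · rintro ⟨e, he, rfl⟩
      rw [hE] at he
      simp only [Finset.mem_union, Finset.mem_image, Finset.mem_range, Finset.mem_Ico] at he
      rcases he with ⟨i, hi, rfl⟩ | ⟨j, ⟨hj1, hjk⟩, rfl⟩
      · rw [hwtM i hi]
        have := hflt i hi
        omega
      · rw [hwtC j hj1 hjk]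
        omega
    · rintro ⟨hw1, hw2⟩
      by_cases hpar : w % 2 = 0
      · -- even weight: cross edge j = k - w/2
        set j := k - w / 2 with hj
        have hj1 : 1 ≤ j := by omega
        have hjk : j < k := by omega
        refine ⟨cE j, ?_, ?_⟩
        · rw [hE]
          simp only [Finset.mem_union, Finset.mem_image, Finset.mem_Ico]
          exact Or.inr ⟨j, ⟨hj1, hjk⟩, rfl⟩
        · rw [hwtC j hj1 hjk]
          omega
      · -- odd weight: matching edge with f i = a
        have hex : ∃ a : ℕ, a < k ∧ ((4 * (a:ℤ)) - (2*k - 1)).natAbs = w := by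
          by_cases h4 : (2*k - 1 + w) % 4 = 0
          · exact ⟨(2*k - 1 + w)/4, by omega, by omega⟩
          · exact ⟨(2*k - 1 - w)/4, by omega, by omega⟩
        obtain ⟨a, hak, haw⟩ := hex
        obtain ⟨i, hik, hfi⟩ := hfsurj a hak
        refine ⟨mE i, ?_, ?_⟩
        · rw [hE]
          simp only [Finset.mem_union, Finset.mem_image, Finset.mem_range]
          exact Or.inl ⟨i, hik, rfl⟩
        · rw [hwtM i hik, hfi]
          exact haw

end LobsterProof



namespace LobsterProof

variable {V : Type*} {G : SimpleGraph V}

/-- Walk along a chain of adjacent vertices between two positions. -/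
lemma exists_seg (l : List V) (hc : l.Chain' G.Adj) (hn : l.Nodup) :
    ∀ i j (hij : i ≤ j) (hj : j < l.length),
    ∃ w : G.Walk (l[i]'(by omega)) (l[j]'hj), w.IsPath ∧ w.length = j - i ∧
      w.support = (l.drop i).take (j - i + 1) := by
  intro i j
  induction j with
  | zero =>
    intro hij hj
    have hi0 : i = 0 := by omega
    subst hi0
    refine ⟨Walk.nil, Walk.IsPath.nil, by simp, ?_⟩
    cases l with
    | nil => simp at hj
    | cons a t => simp
  | succ j IH =>
    intro hij hj
    rcases Nat.eq_or_lt_of_le hij with heq | hlt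
    · subst heq
      refine ⟨Walk.nil, Walk.IsPath.nil, by simp, ?_⟩
      simp only [Walk.support_nil, Nat.sub_self, Nat.zero_add]
      rw [List.take_one, List.head?_drop, List.getElem?_eq_getElem hj]
      rfl
    · have hij' : i ≤ j := by omega
      have hjl : j < l.length := by omega
      obtain ⟨w, hw1, hw2, hw3⟩ := IH hij' hjl
      have hadj : G.Adj (l[j]'hjl) (l[j+1]'hj) := by
        replace hc := List.isChain_iff_getElem.mp hc
        have := hc j (by omega)
        simpa using this
      refine ⟨w.concat hadj, ?_, ?_, ?_⟩
      · rw [Walk.isPath_def, Walk.support_concat]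
        have hnd : ((l.drop i).take (j - i + 1)).Nodup :=
          ((List.take_sublist _ _).trans (List.drop_sublist _ _)).nodup hn
        rw [hw3]
        rw [List.nodup_append]
        refine ⟨hnd, List.nodup_singleton _, ?_⟩
        intro x hx
        simp only [List.mem_singleton, forall_eq]
        intro hx1
        subst hx1
        have hmem := (List.take_sublist _ _).subset hx
        -- l[j+1] ∈ l.drop i at position j+1-i; but take (j-i+1) only has positions < j+1-i
        obtain ⟨t, ht, htv⟩ := List.mem_iff_getElem.mp hx
        have htlen : t < j - i + 1 := by
          have : (List.take (j - i + 1) (l.drop i)).length = min (j - i + 1) (l.drop i).length :=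
              List.length_take
          omega
        rw [List.getElem_take, List.getElem_drop] at htv
        have : i + t < j + 1 := by omega
        have := hn.getElem_inj_iff.mp htv
        omega
      · rw [Walk.length_concat, hw2]
        omega
      · rw [Walk.support_concat, hw3]
        have h1 : j + 1 - i + 1 = (j - i + 1) + 1 := by omega
        rw [h1]
        conv_rhs => rw [List.take_succ]
        congr 1
        have hg : (l.drop i)[j - i + 1]? = some (l[j+1]'hj) := by
          rw [List.getElem?_drop]
          have he : i + (j - i + 1) = j + 1 := by omega
          rw [he]
          exact List.getElem?_eq_getElem hj
        rw [hg]
        rfl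

/-- In an acyclic graph, two paths from `v` to the chain `l`, each meeting `l` only in its
endpoint, have the same endpoint and the same support. -/
lemma anchor_eq (hac : G.IsAcyclic) {l : List V} (hc : l.Chain' G.Adj) (hn : l.Nodup)
    {v s s' : V} (hs : s ∈ l) (hs' : s' ∈ l)
    (q : G.Walk v s) (q' : G.Walk v s') (hq : q.IsPath) (hq' : q'.IsPath)
    (hql : ∀ x ∈ q.support, x ∈ l → x = s) (hq'l : ∀ x ∈ q'.support, x ∈ l → x = s') :
    s = s' ∧ q.support = q'.support := by
  have hmain : s = s' := by
    by_contra hne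
    -- get a path from s to s' with support inside l
    obtain ⟨i, hi, hiv⟩ := List.mem_iff_getElem.mp hs
    obtain ⟨j, hj, hjv⟩ := List.mem_iff_getElem.mp hs'
    subst hiv
    subst hjv
    have hij : i ≠ j := fun h => hne (by subst h; rfl)
    have hseg : ∃ seg : G.Walk (l[i]'hi) (l[j]'hj), seg.IsPath ∧ (∀ x ∈ seg.support, x ∈ l) := by
      rcases Nat.lt_or_ge i j with h | h
      · obtain ⟨w, h1, _, h3⟩ := exists_seg l hc hn i j (by omega) hj
        exact ⟨w, h1, fun x hx => by
          rw [h3] at hx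
          exact (List.take_sublist _ _).subset hx |> (List.drop_sublist _ _).subset⟩
      · obtain ⟨w, h1, _, h3⟩ := exists_seg l hc hn j i (by omega) hi
        exact ⟨w.reverse, h1.reverse, fun x hx => by
          rw [Walk.support_reverse, List.mem_reverse, h3] at hx
          exact (List.take_sublist _ _).subset hx |> (List.drop_sublist _ _).subset⟩
    obtain ⟨seg, hseg1, hseg2⟩ := hseg
    have hW1 : (q.append seg).IsPath := by
      rw [Walk.isPath_def, Walk.support_append, List.nodup_append]
      refine ⟨hq.support_nodup, ?_, ?_⟩
      · exact hseg1.support_nodup.tail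
      · intro x hx _ hx2 rfl
        have hxl : x ∈ l := hseg2 x (List.mem_of_mem_tail hx2)
        have := hql x hx hxl
        subst this
        have hcons := seg.support_eq_cons
        have hnd := hseg1.support_nodup
        rw [hcons, List.nodup_cons] at hnd
        rw [hcons] at hx2
        exact hnd.1 (by simpa using hx2)
    have hEq : q.append seg = q' := by
      have := hac.path_unique ⟨q.append seg, hW1⟩ ⟨q', hq'⟩
      exact congrArg Subtype.val this
    have : (l[i]'hi) ∈ q'.support := by
      rw [← hEq, Walk.mem_support_append_iff]
      exact Or.inl (Walk.end_mem_support q)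
    have := hq'l _ this hs
    exact hne this
  subst hmain
  have hEq : q = q' := by
    have := hac.path_unique ⟨q, hq⟩ ⟨q', hq'⟩
    exact congrArg Subtype.val this
  exact ⟨rfl, by rw [hEq]⟩

end LobsterProof



namespace LobsterProof

variable {V : Type*} {G : SimpleGraph V}

section Hlemmas

variable (hac : G.IsAcyclic) {l : List V} (hc : l.Chain' G.Adj) (hn : l.Nodup)

include hac hc hn in
/-- Adjacent chain members are consecutive. -/
lemma adj_consec {i j : ℕ} (hi : i < l.length) (hj : j < l.length) (hij : i < j)
    (hadj : G.Adj (l[i]'hi) (l[j]'hj)) : j = i + 1 := by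
  obtain ⟨seg, hseg1, hseg2, _⟩ := exists_seg l hc hn i j (by omega) hj
  have hne : (l[i]'hi) ≠ (l[j]'hj) := by
    intro h
    exact absurd (hn.getElem_inj_iff.mp h) (by omega)
  have hedge : (Walk.cons hadj Walk.nil : G.Walk _ _).IsPath := by
    rw [Walk.isPath_def]
    simp [hne]
  have := hac.path_unique ⟨seg, hseg1⟩ ⟨Walk.cons hadj Walk.nil, hedge⟩
  have hv : seg = Walk.cons hadj Walk.nil := congrArg Subtype.val this
  have hlen : seg.length = 1 := by rw [hv]; simp
  omega

include hac hc hn in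
lemma adj_head (hl : l ≠ []) {a : V} (ha : a ∈ l) (hadj : G.Adj a (l.head hl)) :
    ∃ h1 : 1 < l.length, a = l[1] := by
  have h0 : 0 < l.length := List.length_pos_iff.mpr hl
  have hhead : l.head hl = l[0]'h0 := by
    rcases l with _ | ⟨a, t⟩
    · exact absurd rfl hl
    · rfl
  obtain ⟨i, hi, rfl⟩ := List.mem_iff_getElem.mp ha
  rw [hhead] at hadj
  have hi0 : i ≠ 0 := by
    intro h
    subst h
    exact G.irrefl hadj
  have := adj_consec hac hc hn (by omega : (0:ℕ) < l.length) hi (by omega) hadj.symm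
  subst this
  exact ⟨hi, rfl⟩

include hac hc hn in
lemma adj_second (h1 : 1 < l.length) {a : V} (ha : a ∈ l) (hadj : G.Adj a (l[1]'h1)) :
    (a = l[0]'(by omega)) ∨ ∃ h2 : 2 < l.length, a = l[2] := by
  obtain ⟨i, hi, rfl⟩ := List.mem_iff_getElem.mp ha
  rcases Nat.lt_trichotomy i 1 with h | h | h
  · left
    congr 1
    omega
  · exfalso
    have : l[i]'hi = l[1]'h1 := by congr 1
    rw [this] at hadj
    exact G.irrefl hadj
  · have := adj_consec hac hc hn h1 hi h hadj.symm
    subst this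
    exact Or.inr ⟨hi, rfl⟩

include hac hc hn in
/-- A vertex off the chain is adjacent to at most one chain vertex. -/
lemma leg_attach_unique {x s s' : V} (hx : x ∉ l) (hs : s ∈ l) (hs' : s' ∈ l)
    (h1 : G.Adj x s) (h2 : G.Adj x s') : s = s' := by
  have hxs : x ≠ s := fun h => hx (h ▸ hs)
  have hxs' : x ≠ s' := fun h => hx (h ▸ hs')
  have hq : (Walk.cons h1 Walk.nil : G.Walk x s).IsPath := by
    rw [Walk.isPath_def]; simp [hxs]
  have hq' : (Walk.cons h2 Walk.nil : G.Walk x s').IsPath := by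
    rw [Walk.isPath_def]; simp [hxs']
  refine (anchor_eq hac hc hn hs hs' _ _ hq hq' ?_ ?_).1 <;>
  · intro y hy hyl
    simp only [Walk.support_cons, Walk.support_nil, List.mem_cons,
      List.not_mem_nil, or_false] at hy
    rcases hy with rfl | rfl
    · exact absurd hyl hx
    · rfl

include hac hc hn in
/-- A "foot" (neighbor of a leg) is not adjacent to the chain. -/
lemma foot_no_spine {x s g s'' : V} (hx : x ∉ l) (hs : s ∈ l) (hxs : G.Adj x s)
    (hg : g ∉ l) (hgx : G.Adj g x) (hs'' : s'' ∈ l) (hgs : G.Adj g s'') : False := by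
  have hgs' : g ≠ s := fun h => hg (h ▸ hs)
  have hxs' : x ≠ s := fun h => hx (h ▸ hs)
  have hgne : g ≠ x := G.ne_of_adj hgx
  have hq : (Walk.cons hgx (Walk.cons hxs Walk.nil) : G.Walk g s).IsPath := by
    rw [Walk.isPath_def]; simp [hgne, hgs', hxs']
  have hgs2 : g ≠ s'' := fun h => hg (h ▸ hs'')
  have hq' : (Walk.cons hgs Walk.nil : G.Walk g s'').IsPath := by
    rw [Walk.isPath_def]; simp [hgs2]
  have := anchor_eq hac hc hn hs hs'' _ _ hq hq'
    (by intro y hy hyl; simp at hy; rcases hy with rfl | rfl | rfl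
        · exact absurd hyl hg
        · exact absurd hyl hx
        · rfl)
    (by intro y hy hyl; simp at hy; rcases hy with rfl | rfl
        · exact absurd hyl hg
        · rfl)
  have := congrArg List.length this.2
  simp at this

include hac hc hn in
/-- Any second neighbor of a foot leads to a contradiction (given coverage). -/
lemma foot_nbrs {A : Finset V}
    (hcov : ∀ a ∈ A, a ∈ l ∨ (∃ s ∈ l, G.Adj a s) ∨
      (∃ y, y ∈ A ∧ y ∉ l ∧ G.Adj a y ∧ ∃ s ∈ l, G.Adj y s))
    {x s g b : V} (hx : x ∉ l) (hs : s ∈ l) (hxs : G.Adj x s)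
    (hg : g ∉ l) (hgx : G.Adj g x) (hb : b ∈ A) (hgb : G.Adj g b) : b = x := by
  by_contra hbx
  have hgne : g ≠ x := G.ne_of_adj hgx
  have hxsne : x ≠ s := fun h => hx (h ▸ hs)
  have hgsne : g ≠ s := fun h => hg (h ▸ hs)
  have hq : (Walk.cons hgx (Walk.cons hxs Walk.nil) : G.Walk g s).IsPath := by
    rw [Walk.isPath_def]; simp [hgne, hgsne, hxsne]
  have hqsup : ∀ y ∈ (Walk.cons hgx (Walk.cons hxs Walk.nil) : G.Walk g s).support,
      y ∈ l → y = s := by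
    intro y hy hyl
    simp at hy
    rcases hy with rfl | rfl | rfl
    · exact absurd hyl hg
    · exact absurd hyl hx
    · rfl
  rcases hcov b hb with hbl | ⟨s', hs', hbs'⟩ | ⟨y, hyA, hyl, hby, s', hs', hys'⟩
  · exact foot_no_spine hac hc hn hx hs hxs hg hgx hbl hgb
  · -- b is itself a leg : two 2-paths from g
    by_cases hbl : b ∈ l
    · exact foot_no_spine hac hc hn hx hs hxs hg hgx hbl hgb
    have hgbne : g ≠ b := G.ne_of_adj hgb
    have hbs'ne : b ≠ s' := fun h => hbl (h ▸ hs')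
    have hgs'ne : g ≠ s' := fun h => hg (h ▸ hs')
    have hq' : (Walk.cons hgb (Walk.cons hbs' Walk.nil) : G.Walk g s').IsPath := by
      rw [Walk.isPath_def]; simp [hgbne, hgs'ne, hbs'ne]
    have hres := anchor_eq hac hc hn hs hs' _ _ hq hq' hqsup
      (by intro y hy hyl; simp at hy; rcases hy with rfl | rfl | rfl
          · exact absurd hyl hg
          · exact absurd hyl hbl
          · rfl)
    have hsupp := hres.2
    simp only [Walk.support_cons, Walk.support_nil] at hsupp
    have : x = b := by
      have := List.cons.injEq g [x, s] g [b, s'] ▸ hsupp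
      simp at hsupp
      tauto
    exact hbx this.symm
  · -- b is a foot of y
    by_cases hbl : b ∈ l
    · exact foot_no_spine hac hc hn hx hs hxs hg hgx hbl hgb
    rcases eq_or_ne y g with rfl | hyg
    · exact foot_no_spine hac hc hn hx hs hxs hg hgx hs' hys'
    rcases eq_or_ne y x with rfl | hyx
    · -- triangle g-y-b : two paths from b to s
      have hbyne : b ≠ y := hbx
      have hbg : G.Adj b g := hgb.symm
      have hbgne : b ≠ g := fun h => G.ne_of_adj hgb h.symm
      have hbsne : b ≠ s := fun h => hbl (h ▸ hs)
      have hw1 : (Walk.cons hby (Walk.cons hxs Walk.nil) : G.Walk b s).IsPath := by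
        rw [Walk.isPath_def]; simp [hbyne, hbsne, hxsne]
      have hw2 : (Walk.cons hbg (Walk.cons hgx (Walk.cons hxs Walk.nil)) : G.Walk b s).IsPath := by
        rw [Walk.isPath_def]
        simp [hbgne, hbyne, hbsne, hgne, hgsne, hxsne]
      have hres := anchor_eq hac hc hn hs hs _ _ hw1 hw2
        (by intro z hz hzl; simp at hz; rcases hz with rfl | rfl | rfl
            · exact absurd hzl hbl
            · exact absurd hzl hx
            · rfl)
        (by intro z hz hzl; simp at hz; rcases hz with rfl | rfl | rfl | rfl
            · exact absurd hzl hbl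
            · exact absurd hzl hg
            · exact absurd hzl hx
            · rfl)
      have := congrArg List.length hres.2
      simp at this
    · -- path g-b-y-s' vs g-x-s
      have hgbne : g ≠ b := G.ne_of_adj hgb
      have hbyne : b ≠ y := G.ne_of_adj hby
      have hys'ne : y ≠ s' := fun h => hyl (h ▸ hs')
      have hbs'ne : b ≠ s' := fun h => hbl (h ▸ hs')
      have hgs'ne : g ≠ s' := fun h => hg (h ▸ hs')
      have hq' : (Walk.cons hgb (Walk.cons hby (Walk.cons hys' Walk.nil)) :
          G.Walk g s').IsPath := by
        rw [Walk.isPath_def]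
        simp [hgbne, hyg.symm, hgs'ne, hbyne, hbs'ne, hys'ne]
      have hres := anchor_eq hac hc hn hs hs' _ _ hq hq' hqsup
        (by intro z hz hzl; simp at hz; rcases hz with rfl | rfl | rfl | rfl
            · exact absurd hzl hg
            · exact absurd hzl hbl
            · exact absurd hzl hyl
            · rfl)
      have := congrArg List.length hres.2
      simp at this

include hac hc hn in
/-- Neighbors of a leg: the unique spine attachment or feet (with unique neighbor). -/
lemma leg_nbrs {A : Finset V}
    (hcov : ∀ a ∈ A, a ∈ l ∨ (∃ s ∈ l, G.Adj a s) ∨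
      (∃ y, y ∈ A ∧ y ∉ l ∧ G.Adj a y ∧ ∃ s ∈ l, G.Adj y s))
    {x s b : V} (hx : x ∉ l) (hs : s ∈ l) (hxs : G.Adj x s)
    (hb : b ∈ A) (hxb : G.Adj x b) :
    b = s ∨ (b ∉ l ∧ ∀ c ∈ A, G.Adj b c → c = x) := by
  by_cases hbl : b ∈ l
  · exact Or.inl (leg_attach_unique hac hc hn hx hbl hs hxb hxs)
  · refine Or.inr ⟨hbl, fun c hc' hbc => ?_⟩
    exact foot_nbrs hac hc hn hcov hx hs hxs hbl hxb.symm hc' hbc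

end Hlemmas
end LobsterProof

namespace LobsterProof
variable {V : Type*}

section P3C

structure GoodConf (G : SimpleGraph V) (p : V → V) (A : Finset V) (l : List V) : Prop where
  nonempty : l ≠ []
  chain : l.Chain' G.Adj
  nodup : l.Nodup
  sub : ∀ s ∈ l, s ∈ A
  closed : ∀ a ∈ A, p a ∈ A
  cov : ∀ a ∈ A, a ∈ l ∨ (∃ s ∈ l, G.Adj a s) ∨
      (∃ x, x ∈ A ∧ x ∉ l ∧ G.Adj a x ∧ ∃ s ∈ l, G.Adj x s)

structure BuildOut (G : SimpleGraph V) (p : V → V) (A : Finset V) (h0 : V) where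
  k : ℕ
  φ : ℕ → Bool → V
  par : ℕ → ℕ
  sa : ℕ → Bool
  sb : ℕ → Bool
  hidx : ℕ
  hk : 1 ≤ k
  mem : ∀ i s, i < k → φ i s ∈ A
  inj : ∀ i s i' s', i < k → i' < k → φ i s = φ i' s' → i = i' ∧ s = s'
  cover : ∀ v ∈ A, ∃ i s, i < k ∧ φ i s = v
  pairp : ∀ i, i < k → φ i true = p (φ i false)
  par_lt : ∀ j, 1 ≤ j → j < k → par j < j
  sweep : ∀ j, 2 ≤ j → j < k → par j = par (j-1) ∨ par j = j-1
  cadj : ∀ j, 1 ≤ j → j < k → G.Adj (φ j (sa j)) (φ (par j) (sb j))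
  ecov : ∀ a b, a ∈ A → b ∈ A → G.Adj a b →
      (∃ i, i < k ∧ s(a,b) = s(φ i false, φ i true)) ∨
      (∃ j, 1 ≤ j ∧ j < k ∧ s(a,b) = s(φ j (sa j), φ (par j) (sb j)))
  hidx_lt : hidx < k
  hidx_last : hidx = k - 1 ∨ (2 ≤ k ∧ hidx = par (k-1))
  head_mem : ∃ s, φ hidx s = h0

variable {G : SimpleGraph V} {p : V → V}

lemma BuildOut.other_mem {A : Finset V} {h0 : V} (hp2 : ∀ v, p (p v) = v)
    (out : BuildOut G p A h0) : ∃ s, out.φ out.hidx s = p h0 := by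
  obtain ⟨s, hs⟩ := out.head_mem
  rcases s with _ | _
  · exact ⟨true, by rw [out.pairp out.hidx out.hidx_lt, hs]⟩
  · refine ⟨false, ?_⟩
    have := out.pairp out.hidx out.hidx_lt
    rw [hs] at this
    rw [← hp2 (out.φ out.hidx false), ← this]

/-- Base case: a configuration consisting of a single matched pair. -/
lemma base_model {A : Finset V} {u : V} (hp1 : ∀ v, G.Adj v (p v))
    (hu : u ∈ A) (hpu : p u ∈ A) (hsub : ∀ v ∈ A, v = u ∨ v = p u) :
    Nonempty (BuildOut G p A u) := by
  have hne : u ≠ p u := G.ne_of_adj (hp1 u)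
  refine ⟨{
    k := 1
    φ := fun _ s => cond s (p u) u
    par := fun _ => 0
    sa := fun _ => false
    sb := fun _ => false
    hidx := 0
    hk := le_refl 1
    mem := fun i s _ => by cases s <;> simp [hu, hpu]
    inj := fun i s i' s' hi hi' h => by
      cases s <;> cases s' <;> simp_all <;> omega
    cover := fun v hv => by
      rcases hsub v hv with rfl | rfl
      · exact ⟨0, false, by omega, rfl⟩
      · exact ⟨0, true, by omega, rfl⟩
    pairp := fun i _ => rfl
    par_lt := fun j h1 h2 => by omega
    sweep := fun j h1 h2 => by omega
    cadj := fun j h1 h2 => by omega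
    ecov := fun a b ha hb hab => by
      left
      refine ⟨0, by omega, ?_⟩
      rcases hsub a ha with rfl | rfl <;> rcases hsub b hb with rfl | rfl
      · exact absurd rfl (G.ne_of_adj hab)
      · rfl
      · exact Sym2.eq_swap
      · exact absurd rfl (G.ne_of_adj hab)
    hidx_lt := by omega
    hidx_last := Or.inl rfl
    head_mem := ⟨false, rfl⟩ }⟩

/-- Extension: add one pendant pair to a model. -/
lemma extend_model {A A' : Finset V} {h0' u y h0 : V}
    (hp1 : ∀ v, G.Adj v (p v)) (hp2 : ∀ v, p (p v) = v)
    (out : BuildOut G p A' h0')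
    (hA' : ∀ a ∈ A', a ∈ A) (hu : u ∈ A) (hpu : p u ∈ A)
    (huA' : u ∉ A') (hpuA' : p u ∉ A')
    (hcov' : ∀ v ∈ A, v ∈ A' ∨ v = u ∨ v = p u)
    (su tb : Bool) (hyt : out.φ out.hidx tb = y)
    (hcross : G.Adj (cond su (p u) u) y)
    (hecov : ∀ a b, a ∈ A → b ∈ A → G.Adj a b →
        (a ∈ A' ∧ b ∈ A') ∨ s(a,b) = s(u, p u) ∨ s(a,b) = s(cond su (p u) u, y))
    (newHead : Bool) (hh0 : if newHead then h0 = u else h0 = h0') :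
    Nonempty (BuildOut G p A h0) := by
  have hkk := out.hk
  have hhi := out.hidx_lt
  have hune : u ≠ p u := G.ne_of_adj (hp1 u)
  refine ⟨{
    k := out.k + 1
    φ := fun i s => if i = out.k then cond s (p u) u else out.φ i s
    par := fun j => if j = out.k then out.hidx else out.par j
    sa := fun j => if j = out.k then su else out.sa j
    sb := fun j => if j = out.k then tb else out.sb j
    hidx := if newHead then out.k else out.hidx
    hk := by omega
    mem := ?_
    inj := ?_
    cover := ?_
    pairp := ?_
    par_lt := ?_
    sweep := ?_
    cadj := ?_
    ecov := ?_
    hidx_lt := ?_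
    hidx_last := ?_
    head_mem := ?_ }⟩
  · intro i s hi
    by_cases h : i = out.k
    · simp only [h, if_pos rfl]
      cases s <;> simp [hu, hpu]
    · simp only [if_neg h]
      exact hA' _ (out.mem i s (by omega))
  · intro i s i' s' hi hi' h
    by_cases h1 : i = out.k <;> by_cases h2 : i' = out.k
    · subst h1; subst h2
      simp only [if_pos rfl] at h
      refine ⟨rfl, ?_⟩
      cases s <;> cases s' <;> simp_all
    · subst h1
      simp only [if_pos rfl, if_neg h2] at h
      exfalso
      have := out.mem i' s' (by omega)
      cases s <;> simp at h <;> rw [← h] at this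
      · exact huA' this
      · exact hpuA' this
    · subst h2
      simp only [if_pos rfl, if_neg h1] at h
      exfalso
      have := out.mem i s (by omega)
      cases s' <;> simp at h <;> rw [h] at this
      · exact huA' this
      · exact hpuA' this
    · simp only [if_neg h1, if_neg h2] at h
      have := out.inj i s i' s' (by omega) (by omega) h
      exact ⟨this.1, this.2⟩
  · intro v hv
    rcases hcov' v hv with hv' | rfl | rfl
    · obtain ⟨i, s, hi, hs⟩ := out.cover v hv'
      exact ⟨i, s, by omega, by simp only [if_neg (by omega : i ≠ out.k)]; exact hs⟩
    · exact ⟨out.k, false, by omega, by simp⟩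
    · exact ⟨out.k, true, by omega, by simp⟩
  · -- pairp
    intro i hi
    beta_reduce
    by_cases h : i = out.k
    · rw [if_pos h, if_pos h]
      rfl
    · rw [if_neg h, if_neg h]
      exact out.pairp i (by omega)
  · -- par_lt
    intro j h1 h2
    beta_reduce
    by_cases h : j = out.k
    · subst h
      rw [if_pos rfl]
      omega
    · rw [if_neg h]
      exact out.par_lt j h1 (by omega)
  · -- sweep
    intro j h1 h2
    beta_reduce
    by_cases h : j = out.k
    · subst h
      have hne1 : out.k - 1 ≠ out.k := by omega
      rw [if_pos rfl, if_neg hne1]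
      rcases out.hidx_last with hl | ⟨hk2, hl⟩
      · exact Or.inr (by omega)
      · exact Or.inl hl
    · have hj1 : j - 1 ≠ out.k := by omega
      rw [if_neg h, if_neg hj1]
      exact out.sweep j h1 (by omega)
  · -- cadj
    intro j h1 h2
    beta_reduce
    by_cases h : j = out.k
    · subst h
      have hne1 : out.hidx ≠ out.k := by omega
      simp only [↓reduceIte, if_neg hne1, hyt]
      exact hcross
    · have hpj : out.par j ≠ out.k := by
        have := out.par_lt j h1 (by omega)
        omega
      simp only [if_neg h, if_neg hpj]
      exact out.cadj j h1 (by omega)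
  · -- ecov
    intro a b ha hb hab
    beta_reduce
    rcases hecov a b ha hb hab with ⟨ha', hb'⟩ | he | he
    · rcases out.ecov a b ha' hb' hab with ⟨i, hi, he⟩ | ⟨j, hj1, hj2, he⟩
      · refine Or.inl ⟨i, by omega, ?_⟩
        have hik : i ≠ out.k := by omega
        simp only [if_neg hik]
        exact he
      · refine Or.inr ⟨j, hj1, by omega, ?_⟩
        have hjk : j ≠ out.k := by omega
        have hpj : out.par j ≠ out.k := by
          have := out.par_lt j hj1 hj2
          omega
        simp only [if_neg hjk, if_neg hpj]
        exact he
    · refine Or.inl ⟨out.k, by omega, ?_⟩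
      simp only [↓reduceIte]
      exact he
    · refine Or.inr ⟨out.k, by omega, by omega, ?_⟩
      have hne1 : out.hidx ≠ out.k := by omega
      simp only [↓reduceIte, if_neg hne1, hyt]
      exact he
  · -- hidx_lt
    by_cases h : newHead = true
    · rw [if_pos h]; omega
    · rw [if_neg h]; omega
  · -- hidx_last
    beta_reduce
    by_cases h : newHead = true
    · rw [if_pos h]
      exact Or.inl (by omega)
    · rw [if_neg h]
      refine Or.inr ⟨by omega, ?_⟩
      rw [Nat.add_sub_cancel, if_pos rfl]
  · -- head_mem
    beta_reduce
    by_cases h : newHead = true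
    · rw [h] at hh0
      rw [if_pos rfl] at hh0
      refine ⟨false, ?_⟩
      simp only [if_pos h, ↓reduceIte]
      simp [hh0]
    · have hnh : newHead = false := by revert h; cases newHead <;> simp
      subst hnh
      rw [if_neg (by simp)] at hh0
      obtain ⟨s, hs⟩ := out.head_mem
      refine ⟨s, ?_⟩
      have hne1 : out.hidx ≠ out.k := by omega
      simp only [if_neg (by simp : ¬ ((false : Bool) = true)), if_neg hne1]
      rw [hs, hh0]

end P3C

section P3D

variable [DecidableEq V] {G : SimpleGraph V} {p : V → V}

lemma head_eq_getElem (l : List V) (hne : l ≠ []) :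
    l.head hne = l[0]'(List.length_pos_iff.mpr hne) := by
  rcases l with _ | ⟨a, t⟩
  · exact absurd rfl hne
  · rfl

lemma build_model (hac : G.IsAcyclic) (hp1 : ∀ v, G.Adj v (p v)) (hp2 : ∀ v, p (p v) = v) :
    ∀ (n : ℕ) (A : Finset V) (l : List V), A.card ≤ n → GoodConf G p A l →
      ∀ (hne : l ≠ []), Nonempty (BuildOut G p A (l.head hne)) := by
  intro n
  induction n with
  | zero =>
    intro A l hcard gc hne
    have : l.head hne ∈ A := gc.sub _ (List.head_mem hne)
    have hA0 : A = ∅ := Finset.card_eq_zero.mp (by omega)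
    rw [hA0] at this
    simp at this
  | succ n IH =>
    intro A l hcard gc hne
    have hc := gc.chain
    have hn := gc.nodup
    have hhl : l.head hne ∈ l := List.head_mem hne
    have hhA : l.head hne ∈ A := gc.sub _ hhl
    set h := l.head hne with hhdef
    have hh0 : h = l[0]'(List.length_pos_iff.mpr hne) := head_eq_getElem l hne
    by_cases hC1 : ∃ x, x ∈ A ∧ x ∉ l ∧ p x ∉ l ∧ (G.Adj x h ∨ (p h ∈ l ∧ G.Adj x (p h)))
    · -- C1 : remove a leg-foot pair (x, p x)
      obtain ⟨x, hxA, hxl, hpxl, hatt⟩ := hC1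
      have hfA : p x ∈ A := gc.closed x hxA
      have hxf : G.Adj x (p x) := hp1 x
      have hfne : p x ≠ x := (G.ne_of_adj hxf).symm
      obtain ⟨y, hyl, hxy, hyh⟩ : ∃ y, y ∈ l ∧ G.Adj x y ∧ (y = h ∨ y = p h) := by
        rcases hatt with h1 | ⟨h1, h2⟩
        · exact ⟨h, hhl, h1, Or.inl rfl⟩
        · exact ⟨p h, h1, h2, Or.inr rfl⟩
      have hfoot : ∀ c ∈ A, G.Adj (p x) c → c = x := fun c hcA hfc =>
        foot_nbrs hac hc hn gc.cov hxl hyl hxy hpxl hxf.symm hcA hfc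
      have hlegnb : ∀ b ∈ A, G.Adj x b → b = y ∨ b = p x := by
        intro b hbA hxb
        rcases leg_nbrs hac hc hn gc.cov hxl hyl hxy hbA hxb with h1 | ⟨hbl, h2⟩
        · exact Or.inl h1
        · right
          have hpb : p b = x := h2 (p b) (gc.closed b hbA) (hp1 b)
          rw [← hpb, hp2]
      set A' := (A.erase x).erase (p x) with hA'
      have hmemA' : ∀ a, a ∈ A' ↔ (a ≠ p x ∧ a ≠ x ∧ a ∈ A) := by
        intro a
        simp [hA', Finset.mem_erase, and_assoc]
      have hsubA' : ∀ a ∈ A', a ∈ A := fun a ha => ((hmemA' a).mp ha).2.2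
      have hgc' : GoodConf G p A' l := by
        refine ⟨hne, hc, hn, ?_, ?_, ?_⟩
        · intro s hs
          rw [hmemA']
          exact ⟨fun hh => hpxl (hh ▸ hs), fun hh => hxl (hh ▸ hs), gc.sub s hs⟩
        · intro a ha
          rw [hmemA'] at ha ⊢
          obtain ⟨ha1, ha2, ha3⟩ := ha
          refine ⟨?_, ?_, gc.closed a ha3⟩
          · intro hh
            exact ha2 (by rw [← hp2 a, hh, hp2])
          · intro hh
            exact ha1 (by rw [← hp2 a, hh])
        · intro a ha
          have haA := hsubA' a ha
          rw [hmemA'] at ha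
          rcases gc.cov a haA with h1 | ⟨s, hsl, has⟩ | ⟨x', hx'A, hx'l, hax', s, hsl, hx's⟩
          · exact Or.inl h1
          · exact Or.inr (Or.inl ⟨s, hsl, has⟩)
          · rcases eq_or_ne x' x with rfl | hne1
            · rcases hlegnb a haA hax'.symm with rfl | rfl
              · exact Or.inl hyl
              · exact absurd rfl ha.1
            · rcases eq_or_ne x' (p x) with rfl | hne2
              · exact absurd (hfoot a haA hax'.symm) ha.2.1
              · exact Or.inr (Or.inr ⟨x', (hmemA' x').mpr ⟨hne2, hne1, hx'A⟩, hx'l, hax',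
                  s, hsl, hx's⟩)
      have hcard' : A'.card ≤ n := by
        have h1 : (A.erase x).card = A.card - 1 := Finset.card_erase_of_mem hxA
        have h2 : A'.card = (A.erase x).card - 1 :=
          Finset.card_erase_of_mem (Finset.mem_erase.mpr ⟨hfne, hfA⟩)
        omega
      obtain ⟨out⟩ := IH A' l hcard' hgc' hne
      obtain ⟨tb, htb⟩ : ∃ t, out.φ out.hidx t = y := by
        rcases hyh with rfl | rfl
        · exact out.head_mem
        · exact out.other_mem hp2
      refine extend_model hp1 hp2 out hsubA' hxA hfA
        (fun hh => ((hmemA' x).mp hh).2.1 rfl)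
        (fun hh => ((hmemA' (p x)).mp hh).1 rfl)
        (fun v hv => by
          rcases eq_or_ne v x with rfl | h1
          · exact Or.inr (Or.inl rfl)
          rcases eq_or_ne v (p x) with rfl | h2
          · exact Or.inr (Or.inr rfl)
          · exact Or.inl ((hmemA' v).mpr ⟨h2, h1, hv⟩))
        false tb htb hxy ?_ false (by simp [hhdef])
      · -- hecov
        intro a b ha hb hab
        rcases eq_or_ne a x with rfl | hax
        · rcases hlegnb b hb hab with rfl | rfl
          · exact Or.inr (Or.inr rfl)
          · exact Or.inr (Or.inl rfl)
        rcases eq_or_ne b x with rfl | hbx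
        · rcases hlegnb a ha hab.symm with rfl | rfl
          · exact Or.inr (Or.inr Sym2.eq_swap)
          · exact Or.inr (Or.inl Sym2.eq_swap)
        rcases eq_or_ne a (p x) with rfl | haf
        · exact absurd (hfoot b hb hab) hbx
        rcases eq_or_ne b (p x) with rfl | hbf
        · exact absurd (hfoot a ha hab.symm) hax
        · exact Or.inl ⟨(hmemA' a).mpr ⟨haf, hax, ha⟩, (hmemA' b).mpr ⟨hbf, hbx, hb⟩⟩
    · -- C2 : no pendant pair on the head pair
      push_neg at hC1
      have hleg : ∀ b ∈ A, b ∉ l → G.Adj b h → b = p h := by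
        intro b hbA hbl hbh
        by_cases hpbl : p b ∈ l
        · have h1 : p b = h := leg_attach_unique hac hc hn hbl hpbl hhl (hp1 b) hbh
          rw [← hp2 b, h1]
        · exact absurd hbh ((hC1 b hbA hbl hpbl).1)
      have hleg2 : p h ∈ l → ∀ b ∈ A, b ∉ l → ¬ G.Adj b (p h) := by
        intro hph b hbA hbl hbph
        by_cases hpbl : p b ∈ l
        · have h1 : p b = p h := leg_attach_unique hac hc hn hbl hpbl hph (hp1 b) hbph
          have h2 : b = h := by rw [← hp2 b, h1, hp2]
          exact hbl (h2 ▸ hhl)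
        · exact (hC1 b hbA hbl hpbl).2 hph hbph
      by_cases hph : p h ∈ l
      · -- head pair (h, p h) lies on the spine
        have hphh : G.Adj (p h) h := (hp1 h).symm
        obtain ⟨h1len, hph1⟩ := adj_head hac hc hn hne hph hphh
        have hnbh : ∀ b ∈ A, G.Adj b h → b = p h := by
          intro b hbA hbh
          by_cases hbl : b ∈ l
          · obtain ⟨hlen2, hb1⟩ := adj_head hac hc hn hne hbl hbh
            rw [hb1, ← hph1]
          · exact hleg b hbA hbl hbh
        have hnbph : ∀ b ∈ A, G.Adj b (p h) → b = h ∨ ∃ h2 : 2 < l.length, b = l[2] := by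
          intro b hbA hbph
          by_cases hbl : b ∈ l
          · rcases adj_second hac hc hn h1len hbl (by rw [hph1] at hbph; exact hbph)
              with h1 | h2
            · exact Or.inl (by rw [h1, ← hh0])
            · exact Or.inr h2
          · exact absurd hbph (hleg2 hph b hbA hbl)
        by_cases hlen2 : l.length ≤ 2
        · -- base case : l = [h, p h]
          have hlsub : ∀ a ∈ l, a = h ∨ a = p h := by
            intro a hal
            obtain ⟨i, hi, hiv⟩ := List.mem_iff_getElem.mp hal
            rcases (by omega : i = 0 ∨ i = 1) with rfl | rfl
            · exact Or.inl (by rw [← hiv, ← hh0])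
            · exact Or.inr (by rw [← hiv, hph1])
          have hAsub : ∀ v ∈ A, v = h ∨ v = p h := by
            intro v hvA
            rcases gc.cov v hvA with hvl | ⟨s, hsl, hvs⟩ | ⟨x, hxA, hxl, hvx, s, hsl, hxs⟩
            · exact hlsub v hvl
            · by_cases hvl : v ∈ l
              · exact hlsub v hvl
              · rcases hlsub s hsl with rfl | rfl
                · exact Or.inr (hleg v hvA hvl hvs)
                · exact absurd hvs (hleg2 hph v hvA hvl)
            · exfalso
              rcases hlsub s hsl with rfl | rfl
              · exact hxl ((hleg x hxA hxl hxs) ▸ hph)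
              · exact (hleg2 hph x hxA hxl) hxs
          exact base_model hp1 hhA (gc.sub _ hph) hAsub
        · -- recurse after removing (h, p h)
          push_neg at hlen2
          set l' := l.drop 2 with hl'
          have hlen' : l'.length = l.length - 2 := List.length_drop
          have hne' : l' ≠ [] := by
            intro hcon
            rw [← List.length_eq_zero_iff] at hcon
            omega
          have hchain' : l'.Chain' G.Adj := hc.drop 2
          have hnodup' : l'.Nodup := hn.sublist (List.drop_sublist 2 l)
          have hmem_drop : ∀ a ∈ l', a ∈ l := fun a ha => (List.drop_sublist 2 l).subset ha
          have hgetl' : ∀ (t : ℕ) (ht : t < l'.length), l'[t]'ht = l[2+t]'(by omega) := by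
            intro t ht
            exact List.getElem_drop ..
          have hdrop_ne : ∀ a ∈ l', a ≠ h ∧ a ≠ p h := by
            intro a ha
            obtain ⟨t, ht, htv⟩ := List.mem_iff_getElem.mp ha
            rw [hgetl' t ht] at htv
            constructor
            · intro heq
              have h2 : l[2+t]'(by omega) = l[0]'(by omega) := by rw [htv, heq, hh0]
              have := hn.getElem_inj_iff.mp h2
              omega
            · intro heq
              have h2 : l[2+t]'(by omega) = l[1]'(by omega) := by rw [htv, heq, hph1]
              have := hn.getElem_inj_iff.mp h2
              omega
          have hlsplit : ∀ a ∈ l, a = h ∨ a = p h ∨ a ∈ l' := by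
            intro a ha
            obtain ⟨i, hi, hiv⟩ := List.mem_iff_getElem.mp ha
            rcases (by omega : i = 0 ∨ i = 1 ∨ 2 ≤ i) with rfl | rfl | h2
            · exact Or.inl (by rw [← hiv, ← hh0])
            · exact Or.inr (Or.inl (by rw [← hiv, hph1]))
            · refine Or.inr (Or.inr ?_)
              rw [← hiv]
              have : l[i] = l'[i-2]'(by omega) := by
                rw [hgetl' (i-2) (by omega)]
                congr 1
                omega
              rw [this]
              exact List.getElem_mem _
          set A' := (A.erase h).erase (p h) with hA'
          have hmemA' : ∀ a, a ∈ A' ↔ (a ≠ p h ∧ a ≠ h ∧ a ∈ A) := by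
            intro a
            simp [hA', Finset.mem_erase, and_assoc]
          have hsubA' : ∀ a ∈ A', a ∈ A := fun a ha => ((hmemA' a).mp ha).2.2
          have hphA : p h ∈ A := gc.sub _ hph
          have hgc' : GoodConf G p A' l' := by
            refine ⟨hne', hchain', hnodup', ?_, ?_, ?_⟩
            · intro s hs
              rw [hmemA']
              exact ⟨(hdrop_ne s hs).2, (hdrop_ne s hs).1, gc.sub s (hmem_drop s hs)⟩
            · intro a ha
              rw [hmemA'] at ha ⊢
              obtain ⟨ha1, ha2, ha3⟩ := ha
              refine ⟨?_, ?_, gc.closed a ha3⟩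
              · intro hh
                exact ha2 (by rw [← hp2 a, hh, hp2])
              · intro hh
                exact ha1 (by rw [← hp2 a, hh])
            · intro a ha
              have haA := hsubA' a ha
              rw [hmemA'] at ha
              rcases gc.cov a haA with h1 | ⟨s, hsl, has⟩ | ⟨x, hxA, hxl, hax, s, hsl, hxs⟩
              · rcases hlsplit a h1 with rfl | rfl | h3
                · exact absurd rfl ha.2.1
                · exact absurd rfl ha.1
                · exact Or.inl h3
              · rcases hlsplit s hsl with rfl | rfl | h3
                · -- s = h : a adjacent to h
                  by_cases hal : a ∈ l
                  · rcases hlsplit a hal with rfl | rfl | h4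
                    · exact absurd rfl ha.2.1
                    · exact absurd rfl ha.1
                    · exact Or.inl h4
                  · exact absurd (hleg a haA hal has) ha.1
                · -- s = p h
                  by_cases hal : a ∈ l
                  · rcases hlsplit a hal with rfl | rfl | h4
                    · exact absurd rfl ha.2.1
                    · exact absurd rfl ha.1
                    · exact Or.inl h4
                  · exact absurd has (hleg2 hph a haA hal)
                · exact Or.inr (Or.inl ⟨s, h3, has⟩)
              · -- a is a foot through x
                have hxh : x ≠ h := fun hh => hxl (hh ▸ hhl)
                have hxph : x ≠ p h := fun hh => hxl (hh ▸ hph)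
                rcases hlsplit s hsl with rfl | rfl | h3
                · exact absurd (hxl ((hleg x hxA hxl hxs) ▸ hph)) not_false
                · exact absurd hxs (hleg2 hph x hxA hxl)
                · exact Or.inr (Or.inr ⟨x, (hmemA' x).mpr ⟨hxph, hxh, hxA⟩,
                    fun hx' => hxl (hmem_drop x hx'), hax, s, h3, hxs⟩)
          have hcard' : A'.card ≤ n := by
            have hne2 : p h ≠ h := G.ne_of_adj hphh
            have h1 : (A.erase h).card = A.card - 1 := Finset.card_erase_of_mem hhA
            have h2 : A'.card = (A.erase h).card - 1 :=
              Finset.card_erase_of_mem (Finset.mem_erase.mpr ⟨hne2, hphA⟩)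
            omega
          obtain ⟨out⟩ := IH A' l' hcard' hgc' hne'
          have hhead' : l'.head hne' = l[2]'hlen2 := by
            rw [head_eq_getElem l' hne', hgetl' 0 (List.length_pos_iff.mpr hne')]
          obtain ⟨tb, htb⟩ := out.head_mem
          have hcr : G.Adj (p h) (l'.head hne') := by
            rw [hhead', hph1]
            replace hc := List.isChain_iff_getElem.mp hc
            have := hc 1 (by omega)
            simpa using this
          refine extend_model hp1 hp2 out hsubA' hhA hphA
            (fun hh => ((hmemA' h).mp hh).2.1 rfl)
            (fun hh => ((hmemA' (p h)).mp hh).1 rfl)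
            (fun v hv => by
              rcases eq_or_ne v h with rfl | h1
              · exact Or.inr (Or.inl rfl)
              rcases eq_or_ne v (p h) with rfl | h2
              · exact Or.inr (Or.inr rfl)
              · exact Or.inl ((hmemA' v).mpr ⟨h2, h1, hv⟩))
            true tb htb hcr ?_ true (by simp)
          · intro a b ha hb hab
            rcases eq_or_ne a h with rfl | hah
            · have := hnbh b hb hab.symm
              subst this
              exact Or.inr (Or.inl rfl)
            rcases eq_or_ne b h with rfl | hbh
            · have := hnbh a ha hab
              subst this
              exact Or.inr (Or.inl Sym2.eq_swap)
            rcases eq_or_ne a (p h) with rfl | haph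
            · rcases hnbph b hb hab.symm with rfl | ⟨h2, rfl⟩
              · exact absurd rfl hbh
              · refine Or.inr (Or.inr ?_)
                rw [hhead']
                rfl
            rcases eq_or_ne b (p h) with rfl | hbph
            · rcases hnbph a ha hab with rfl | ⟨h2, rfl⟩
              · exact absurd rfl hah
              · refine Or.inr (Or.inr ?_)
                rw [hhead']
                exact Sym2.eq_swap
            · exact Or.inl ⟨(hmemA' a).mpr ⟨haph, hah, ha⟩, (hmemA' b).mpr ⟨hbph, hbh, hb⟩⟩
      · -- head pair (h, p h) with p h a pendant leg
        have hlA : p h ∈ A := gc.closed h hhA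
        have hadj : G.Adj h (p h) := hp1 h
        have hnbl : ∀ b ∈ A, G.Adj b (p h) → b = h := by
          intro b hbA hbl'
          rcases leg_nbrs hac hc hn gc.cov hph hhl hadj.symm hbA hbl'.symm with h1 | ⟨hbl, h2⟩
          · exact h1
          · have hpb : p b = p h := h2 (p b) (gc.closed b hbA) (hp1 b)
            rw [← hp2 b, hpb, hp2]
        by_cases hlen1 : l.length ≤ 1
        · -- base case : l = [h]
          have hlsub : ∀ a ∈ l, a = h := by
            intro a hal
            obtain ⟨i, hi, hiv⟩ := List.mem_iff_getElem.mp hal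
            have : i = 0 := by omega
            subst this
            rw [← hiv, ← hh0]
          have hAsub : ∀ v ∈ A, v = h ∨ v = p h := by
            intro v hvA
            rcases gc.cov v hvA with hvl | ⟨s, hsl, hvs⟩ | ⟨x, hxA, hxl, hvx, s, hsl, hxs⟩
            · exact Or.inl (hlsub v hvl)
            · by_cases hvl : v ∈ l
              · exact Or.inl (hlsub v hvl)
              · have hs : s = h := hlsub s hsl
                exact Or.inr (hleg v hvA hvl (hs ▸ hvs))
            · have hs : s = h := hlsub s hsl
              have hxh : x = p h := hleg x hxA hxl (hs ▸ hxs)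
              subst hxh
              exact Or.inl (hnbl v hvA hvx)
          exact base_model hp1 hhA hlA hAsub
        · -- recurse after removing (h, p h)
          push_neg at hlen1
          set l' := l.drop 1 with hl'
          have hlen' : l'.length = l.length - 1 := List.length_drop
          have hne' : l' ≠ [] := by
            intro hcon
            rw [← List.length_eq_zero_iff] at hcon
            omega
          have hchain' : l'.Chain' G.Adj := hc.drop 1
          have hnodup' : l'.Nodup := hn.sublist (List.drop_sublist 1 l)
          have hmem_drop : ∀ a ∈ l', a ∈ l := fun a ha => (List.drop_sublist 1 l).subset ha
          have hgetl' : ∀ (t : ℕ) (ht : t < l'.length), l'[t]'ht = l[1+t]'(by omega) := by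
            intro t ht
            exact List.getElem_drop ..
          have hdrop_ne : ∀ a ∈ l', a ≠ h := by
            intro a ha
            obtain ⟨t, ht, htv⟩ := List.mem_iff_getElem.mp ha
            rw [hgetl' t ht] at htv
            intro heq
            have h2 : l[1+t]'(by omega) = l[0]'(by omega) := by rw [htv, heq, hh0]
            have := hn.getElem_inj_iff.mp h2
            omega
          have hlsplit : ∀ a ∈ l, a = h ∨ a ∈ l' := by
            intro a ha
            obtain ⟨i, hi, hiv⟩ := List.mem_iff_getElem.mp ha
            rcases (by omega : i = 0 ∨ 1 ≤ i) with rfl | h2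
            · exact Or.inl (by rw [← hiv, ← hh0])
            · refine Or.inr ?_
              rw [← hiv]
              have : l[i] = l'[i-1]'(by omega) := by
                rw [hgetl' (i-1) (by omega)]
                congr 1
                omega
              rw [this]
              exact List.getElem_mem _
          set A' := (A.erase h).erase (p h) with hA'
          have hmemA' : ∀ a, a ∈ A' ↔ (a ≠ p h ∧ a ≠ h ∧ a ∈ A) := by
            intro a
            simp [hA', Finset.mem_erase, and_assoc]
          have hsubA' : ∀ a ∈ A', a ∈ A := fun a ha => ((hmemA' a).mp ha).2.2
          have hgc' : GoodConf G p A' l' := by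
            refine ⟨hne', hchain', hnodup', ?_, ?_, ?_⟩
            · intro s hs
              rw [hmemA']
              exact ⟨fun hh => hph (hh ▸ hmem_drop s hs), hdrop_ne s hs,
                gc.sub s (hmem_drop s hs)⟩
            · intro a ha
              rw [hmemA'] at ha ⊢
              obtain ⟨ha1, ha2, ha3⟩ := ha
              refine ⟨?_, ?_, gc.closed a ha3⟩
              · intro hh
                exact ha2 (by rw [← hp2 a, hh, hp2])
              · intro hh
                exact ha1 (by rw [← hp2 a, hh])
            · intro a ha
              have haA := hsubA' a ha
              rw [hmemA'] at ha
              rcases gc.cov a haA with h1 | ⟨s, hsl, has⟩ | ⟨x, hxA, hxl, hax, s, hsl, hxs⟩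
              · rcases hlsplit a h1 with rfl | h3
                · exact absurd rfl ha.2.1
                · exact Or.inl h3
              · rcases hlsplit s hsl with rfl | h3
                · by_cases hal : a ∈ l
                  · rcases hlsplit a hal with rfl | h4
                    · exact absurd rfl ha.2.1
                    · exact Or.inl h4
                  · exact absurd (hleg a haA hal has) ha.1
                · exact Or.inr (Or.inl ⟨s, h3, has⟩)
              · have hxh : x ≠ h := fun hh => hxl (hh ▸ hhl)
                rcases eq_or_ne x (p h) with rfl | hxph
                · exact absurd (hnbl a haA hax) ha.2.1
                · rcases hlsplit s hsl with rfl | h3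
                  · exact absurd ((hleg x hxA hxl hxs)) hxph
                  · exact Or.inr (Or.inr ⟨x, (hmemA' x).mpr ⟨hxph, hxh, hxA⟩,
                      fun hx' => hxl (hmem_drop x hx'), hax, s, h3, hxs⟩)
          have hcard' : A'.card ≤ n := by
            have hne2 : p h ≠ h := (G.ne_of_adj hadj).symm
            have h1 : (A.erase h).card = A.card - 1 := Finset.card_erase_of_mem hhA
            have h2 : A'.card = (A.erase h).card - 1 :=
              Finset.card_erase_of_mem (Finset.mem_erase.mpr ⟨hne2, hlA⟩)
            omega
          obtain ⟨out⟩ := IH A' l' hcard' hgc' hne'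
          have hhead' : l'.head hne' = l[1]'hlen1 := by
            rw [head_eq_getElem l' hne', hgetl' 0 (List.length_pos_iff.mpr hne')]
          obtain ⟨tb, htb⟩ := out.head_mem
          have hcr : G.Adj h (l'.head hne') := by
            rw [hhead', hh0]
            replace hc := List.isChain_iff_getElem.mp hc
            have := hc 0 (by omega)
            simpa using this
          have hnbh2 : ∀ b ∈ A, G.Adj b h → b = p h ∨ b = l[1]'hlen1 := by
            intro b hbA hbh
            by_cases hbl : b ∈ l
            · obtain ⟨hlt, hb1⟩ := adj_head hac hc hn hne hbl hbh
              exact Or.inr hb1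
            · exact Or.inl (hleg b hbA hbl hbh)
          refine extend_model hp1 hp2 out hsubA' hhA hlA
            (fun hh => ((hmemA' h).mp hh).2.1 rfl)
            (fun hh => ((hmemA' (p h)).mp hh).1 rfl)
            (fun v hv => by
              rcases eq_or_ne v h with rfl | h1
              · exact Or.inr (Or.inl rfl)
              rcases eq_or_ne v (p h) with rfl | h2
              · exact Or.inr (Or.inr rfl)
              · exact Or.inl ((hmemA' v).mpr ⟨h2, h1, hv⟩))
            false tb htb hcr ?_ true (by simp)
          · intro a b ha hb hab
            rcases eq_or_ne a h with rfl | hah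
            · rcases hnbh2 b hb hab.symm with rfl | rfl
              · exact Or.inr (Or.inl rfl)
              · refine Or.inr (Or.inr ?_)
                rw [hhead']
                rfl
            rcases eq_or_ne b h with rfl | hbh
            · rcases hnbh2 a ha hab with rfl | rfl
              · exact Or.inr (Or.inl Sym2.eq_swap)
              · refine Or.inr (Or.inr ?_)
                rw [hhead']
                exact Sym2.eq_swap
            rcases eq_or_ne a (p h) with rfl | haph
            · exact absurd (hnbl b hb hab.symm) hbh
            rcases eq_or_ne b (p h) with rfl | hbph
            · exact absurd (hnbl a ha hab) hah
            · exact Or.inl ⟨(hmemA' a).mpr ⟨haph, hah, ha⟩, (hmemA' b).mpr ⟨hbph, hbh, hb⟩⟩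

end P3D

section Glue

variable {G : SimpleGraph V}

lemma walk2 {a b : V} (w : G.Walk a b) (h : w.length = 2) :
    ∃ c, G.Adj a c ∧ G.Adj c b := by
  cases w with
  | nil => simp at h
  | cons hadj q =>
    refine ⟨_, hadj, ?_⟩
    apply Walk.adj_of_length_eq_one
    simpa using h

end Glue
end LobsterProof

theorem stmt7 {V : Type*} [Fintype V] (G : SimpleGraph V)
    (hL : IsKDistantTree G 2) (M : G.Subgraph) (hM : M.IsPerfectMatching) :
    IsGraceful G := by
  classical
  obtain ⟨hT, u, v, pw, hlp, hcov⟩ := hL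
  have hpath : pw.IsPath := hlp.1
  have hac : G.IsAcyclic := hT.IsAcyclic
  have hconn : G.Connected := hT.isConnected
  rw [SimpleGraph.Subgraph.isPerfectMatching_iff] at hM
  have hM' : ∀ w : V, ∃ x, M.Adj w x ∧ ∀ y, M.Adj w y → y = x := fun w => hM w
  choose p hpadj hpuniq using hM'
  have hp1 : ∀ w, G.Adj w (p w) := fun w => M.adj_sub (hpadj w)
  have hp2 : ∀ w, p (p w) = w := by
    intro w
    exact (hpuniq (p w) w (hpadj w).symm).symm
  set l := pw.support with hl
  have hne : l ≠ [] := pw.support_ne_nil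
  have gc : LobsterProof.GoodConf G p Finset.univ l := by
    refine ⟨hne, pw.isChain_adj_support, hpath.support_nodup,
      fun s _ => Finset.mem_univ s, fun a _ => Finset.mem_univ (p a), ?_⟩
    intro a _
    obtain ⟨b, hb, hdist⟩ := hcov a
    rcases Nat.lt_or_ge (G.dist a b) 1 with h0 | h1
    · have hab : a = b := (hconn.dist_eq_zero_iff).mp (by omega)
      exact Or.inl (hab ▸ hb)
    · obtain ⟨w, hw⟩ := SimpleGraph.exists_walk_of_dist_ne_zero
        (G := G) (u := a) (v := b) (by omega)
      rcases (by omega : G.dist a b = 1 ∨ G.dist a b = 2) with h | h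
      · have : G.Adj a b := SimpleGraph.Walk.adj_of_length_eq_one (by rw [hw, h])
        exact Or.inr (Or.inl ⟨b, hb, this⟩)
      · obtain ⟨c, hac1, hcb⟩ := LobsterProof.walk2 w (by rw [hw, h])
        by_cases hcl : c ∈ l
        · exact Or.inr (Or.inl ⟨c, hcl, hac1⟩)
        · exact Or.inr (Or.inr ⟨c, Finset.mem_univ c, hcl, hac1, b, hb, hcb⟩)
  obtain ⟨out⟩ := LobsterProof.build_model hac hp1 hp2 Finset.univ.card
    Finset.univ l (le_refl _) gc hne
  apply LobsterProof.pairModel_graceful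
  exact {
    k := out.k
    hk := out.hk
    φ := out.φ
    par := out.par
    sa := out.sa
    sb := out.sb
    inj := fun i s i' s' hi hi' hh => out.inj i s i' s' hi hi' hh
    cover := fun w => by
      obtain ⟨i, s, hi, hs⟩ := out.cover w (Finset.mem_univ w)
      exact ⟨i, s, hi, hs⟩
    par_lt := out.par_lt
    sweep := out.sweep
    medge := fun i hi => by
      rw [out.pairp i hi]
      exact hp1 _
    cedge := out.cadj
    edges := by
      intro e
      refine Sym2.ind (fun a b he => ?_) e
      exact out.ecov a b (Finset.mem_univ a) (Finset.mem_univ b)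
        ((SimpleGraph.mem_edgeSet G).mp he) }
end

section
/- For any lobster T of order n, the shell of T has a perfect matching if n' is even, and a matching covering n'-1 vertices if n' is odd, where n' is the order of the shell. -/
open SimpleGraph

namespace Stmt8Aux

lemma getVert_inj {V : Type*} {G : SimpleGraph V} {u v : V} {p : G.Walk u v}
    (hp : p.IsPath) : ∀ i ≤ p.length, ∀ j ≤ p.length, p.getVert i = p.getVert j → i = j := by
  induction p with
  | nil => intro i hi j hj _; simp at hi hj; omega
  | @cons a b c h q ih =>
    rw [Walk.cons_isPath_iff] at hp
    intro i hi j hj hij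
    simp only [Walk.length_cons] at hi hj
    match i, j with
    | 0, 0 => rfl
    | 0, j+1 =>
      exfalso; apply hp.2
      rw [Walk.mem_support_iff_exists_getVert]
      refine ⟨j, ?_, by omega⟩
      simpa [Walk.getVert_zero, Walk.getVert_cons_succ] using hij.symm
    | i+1, 0 =>
      exfalso; apply hp.2
      rw [Walk.mem_support_iff_exists_getVert]
      refine ⟨i, ?_, by omega⟩
      simpa [Walk.getVert_zero, Walk.getVert_cons_succ] using hij
    | i+1, j+1 =>
      have := ih hp.1 i (by omega) j (by omega)
        (by simpa [Walk.getVert_cons_succ] using hij)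
      omega

lemma between {V : Type*} {G : SimpleGraph V} {u v b x : V} {p : G.Walk u v} (hp : p.IsPath)
    (hb : b ∈ p.support) (hx : x ∈ p.support) :
    ∃ r : G.Walk b x, r.IsPath ∧ ∀ y ∈ r.support, y ∈ p.support := by
  classical
  have hsplit : x ∈ (p.takeUntil b hb).support ∨ x ∈ (p.dropUntil b hb).support := by
    have hx' := hx
    rw [← Walk.take_spec p hb, Walk.support_append, List.mem_append] at hx'
    exact hx'.imp id List.mem_of_mem_tail
  rcases hsplit with hx1 | hx2
  · refine ⟨((p.takeUntil b hb).dropUntil x hx1).reverse,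
      ((hp.takeUntil hb).dropUntil hx1).reverse, fun y hy => ?_⟩
    rw [Walk.support_reverse, List.mem_reverse] at hy
    exact (Walk.support_takeUntil_subset p hb) ((Walk.support_dropUntil_subset _ hx1) hy)
  · exact ⟨(p.dropUntil b hb).takeUntil x hx2, (hp.dropUntil hb).takeUntil hx2,
      fun y hy => (Walk.support_dropUntil_subset p hb) ((Walk.support_takeUntil_subset _ hx2) hy)⟩

lemma matching_of_involution {V : Type*} (G : SimpleGraph V) (μ : V → V)
    (hinv : ∀ w, μ (μ w) = w) (hadj : ∀ w, μ w ≠ w → G.Adj w (μ w)) :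
    ∃ M : G.Subgraph, M.IsMatching ∧ M.verts = {w | μ w ≠ w} := by
  refine ⟨⟨{w | μ w ≠ w}, fun a b => μ a = b ∧ a ≠ b, ?_, ?_, ?_⟩, ?_, rfl⟩
  · rintro a b ⟨rfl, hne⟩
    exact hadj a (Ne.symm hne)
  · rintro a b ⟨rfl, hne⟩
    exact Ne.symm hne
  · refine ⟨?_⟩; rintro a b ⟨rfl, hne⟩
    exact ⟨hinv a, Ne.symm hne⟩
  · intro w hw
    exact ⟨μ w, ⟨rfl, Ne.symm hw⟩, fun y hy => hy.1.symm⟩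

end Stmt8Aux

theorem stmt8 {V : Type*} [Fintype V] (G : SimpleGraph V)
    (h : IsLobsterShell G) :
    (Even (Nat.card V) → ∃ M : G.Subgraph, M.IsPerfectMatching) ∧
    (¬ Even (Nat.card V) →
      ∃ M : G.Subgraph, M.IsMatching ∧ M.verts.ncard = Nat.card V - 1) := by
  classical
  obtain ⟨htree, u, v, p, ⟨hp, -⟩, hd2, hdeg⟩ := h
  have huniq : ∀ {a b : V} {q r : G.Walk a b}, q.IsPath → r.IsPath → q = r :=
    fun hq hr => (htree.existsUnique_path _ _).unique hq hr
  have hsub : ∀ {b x : V}, b ∈ p.support → x ∈ p.support →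
      ∀ (q : G.Walk b x), q.IsPath → ∀ y ∈ q.support, y ∈ p.support := by
    intro b x hb hx q hq y hy
    obtain ⟨r, hr, hrs⟩ := Stmt8Aux.between hp hb hx
    exact hrs y (huniq hq hr ▸ hy)
  have hdeg3 : ∀ m, m ∉ p.support → (∃ b ∈ p.support, G.Adj m b) →
      ∀ x y z, G.Adj m x → G.Adj m y → G.Adj m z → x ≠ y → x ≠ z → y ≠ z → False := by
    intro m hm hmb x y z hx hy hz hxy hxz hyz
    have h2 := hdeg m hm hmb
    have hsub3 : ({x, y, z} : Set V) ⊆ G.neighborSet m := by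
      rintro w (rfl | rfl | rfl) <;> assumption
    have h3 : ({x, y, z} : Set V).ncard = 3 := by
      rw [Set.ncard_insert_of_notMem (by simp [hxy, hxz]), Set.ncard_pair hyz]
    have hle := Set.ncard_le_ncard hsub3 (Set.toFinite _)
    omega
  have hclass : ∀ w, w ∉ p.support → (∃ b ∈ p.support, G.Adj w b) ∨
      (∃ m, m ∉ p.support ∧ G.Adj w m ∧ ∃ b ∈ p.support, G.Adj m b) := by
    intro w hw
    obtain ⟨b, hb, hdist⟩ := hd2 w
    have hne : w ≠ b := fun hh => hw (hh ▸ hb)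
    obtain ⟨q, hql⟩ := (htree.isConnected w b).exists_walk_length_eq_dist
    have hq2 : q.length ≤ 2 := hql ▸ hdist
    have hq0 : q.length ≠ 0 := fun hh => hne (Walk.eq_of_length_eq_zero hh)
    have hgv0 : q.getVert 0 = w := q.getVert_zero
    interval_cases hlen : q.length
    · omega
    · left
      refine ⟨b, hb, ?_⟩
      have hgl : q.getVert 1 = b := by rw [← hlen]; exact q.getVert_length
      have := q.adj_getVert_succ (i := 0) (by omega)
      rwa [hgv0, hgl] at this
    · have h01 := q.adj_getVert_succ (i := 0) (by omega)
      have h12 := q.adj_getVert_succ (i := 1) (by omega)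
      rw [hgv0] at h01
      have hgl : q.getVert 2 = b := by rw [← hlen]; exact q.getVert_length
      rw [show (1:ℕ)+1 = 2 from rfl, hgl] at h12
      by_cases hc : q.getVert 1 ∈ p.support
      · exact Or.inl ⟨q.getVert 1, hc, h01⟩
      · exact Or.inr ⟨q.getVert 1, hc, h01, b, hb, h12⟩
  have hA : ∀ m, m ∉ p.support → ∀ b, b ∈ p.support → G.Adj m b →
      ∃! x, x ∉ p.support ∧ G.Adj m x := by
    intro m hm b hb hmb
    have h2 := hdeg m hm ⟨b, hb, hmb⟩
    have hex : ∃ x, G.Adj m x ∧ x ≠ b := by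
      by_contra hno
      push_neg at hno
      have hss : G.neighborSet m ⊆ {b} := fun y hy => hno y hy
      have := Set.ncard_le_ncard hss (Set.toFinite _)
      rw [Set.ncard_singleton] at this
      omega
    obtain ⟨x, hmx, hxb⟩ := hex
    have hxoff : x ∉ p.support := by
      intro hxs
      have hq : (Walk.cons hmb.symm (Walk.cons hmx Walk.nil) : G.Walk b x).IsPath := by
        rw [Walk.isPath_def]
        simp only [Walk.support_cons, Walk.support_nil, List.nodup_cons, List.mem_cons,
          List.mem_singleton, List.not_mem_nil, not_false_iff, List.nodup_nil, and_true]
        refine ⟨?_, ?_⟩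
        · rintro (rfl | rfl | hh)
          · exact hm hb
          · exact hxb rfl
          · exact hh
        · rintro (rfl | hh)
          · exact hmx.ne rfl
          · exact hh
      exact hm (hsub hb hxs _ hq m (by simp))
    refine ⟨x, ⟨hxoff, hmx⟩, ?_⟩
    rintro y ⟨hyoff, hmy⟩
    by_contra hne
    exact hdeg3 m hm ⟨b, hb, hmb⟩ y x b hmy hmx hmb hne (fun hh => hyoff (hh ▸ hb))
      (fun hh => hxoff (hh ▸ hb))
  have hbridge : ∀ m b m' b' : V, m ∉ p.support → m' ∉ p.support → b ∈ p.support →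
      b' ∈ p.support → G.Adj m b → G.Adj m' b' → ∀ (q : G.Walk m m'), q.IsPath →
      (∀ z ∈ q.support, z ∉ p.support) → m = m' := by
    intro m b m' b' hm hm' hb hb' hmb hm'b' q hq hqs
    by_contra hne
    obtain ⟨r, hr, hrs⟩ := Stmt8Aux.between hp hb hb'
    have hm'r : m' ∉ r.support := fun hh => hm' (hrs _ hh)
    have hmr : m ∉ r.support := fun hh => hm (hrs _ hh)
    have hq2 : (Walk.cons hmb (r.append (Walk.cons hm'b'.symm Walk.nil)) : G.Walk m m').IsPath := by
      rw [Walk.isPath_def]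
      simp only [Walk.support_cons, Walk.support_append, Walk.support_nil, List.tail_cons,
        List.nodup_cons, List.mem_append, List.mem_singleton]
      refine ⟨?_, ?_⟩
      · rintro (hh | rfl)
        · exact hmr hh
        · exact hne rfl
      · rw [List.nodup_append]
        exact ⟨hr.support_nodup, List.nodup_singleton _,
          by intro z hz; simp only [List.mem_singleton]; rintro _ rfl h; subst h; exact hm'r hz⟩
    have heq := huniq hq hq2
    have hbq2 : b ∈ (Walk.cons hmb (r.append (Walk.cons hm'b'.symm Walk.nil)) : G.Walk m m').support := by
      simp only [Walk.support_cons, Walk.support_append, List.mem_cons, List.mem_append]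
      exact Or.inr (Or.inl r.start_mem_support)
    rw [← heq] at hbq2
    exact (hqs b hbq2) hb
  have key : ∀ w, (hw : w ∉ p.support) → ∃! x, x ∉ p.support ∧ G.Adj w x := by
    intro w hw
    by_cases hwA : ∃ b ∈ p.support, G.Adj w b
    · obtain ⟨b, hb, hwb⟩ := hwA
      exact hA w hw b hb hwb
    · push_neg at hwA
      rcases hclass w hw with ⟨b, hb, hwb⟩ | ⟨m, hm, hwm, b, hb, hmb⟩
      · exact absurd hwb (hwA b hb)
      · refine ⟨m, ⟨hm, hwm⟩, ?_⟩
        rintro y ⟨hy, hwy⟩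
        by_contra hne
        rcases hclass y hy with ⟨b', hb', hyb'⟩ | ⟨m', hm', hym', b', hb', hm'b'⟩
        · have hq : (Walk.cons hwm.symm (Walk.cons hwy Walk.nil) : G.Walk m y).IsPath := by
            rw [Walk.isPath_def]
            simp only [Walk.support_cons, Walk.support_nil, List.nodup_cons, List.mem_cons,
              List.mem_singleton, List.not_mem_nil, not_false_iff, List.nodup_nil, and_true]
            refine ⟨?_, ?_⟩
            · rintro (rfl | rfl | hh)
              · exact hwm.ne rfl
              · exact hne rfl
              · exact hh
            · rintro (rfl | hh)
              · exact hwy.ne rfl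
              · exact hh
          have hall : ∀ z ∈ (Walk.cons hwm.symm (Walk.cons hwy Walk.nil) : G.Walk m y).support,
              z ∉ p.support := by
            intro z hz
            simp only [Walk.support_cons, Walk.support_nil, List.mem_cons,
              List.mem_singleton, List.not_mem_nil] at hz
            rcases hz with rfl | rfl | rfl | hh
            · exact hm
            · exact hw
            · exact hy
            · exact absurd hh (by simp)
          exact hne ((hbridge m b y b' hm hy hb hb' hmb hyb' _ hq hall).symm)
        · have hm'w : m' ≠ w := fun hh => (hwA b' hb') (hh ▸ hm'b')
          have hm'm : m' ≠ m := by
            rintro rfl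
            exact hdeg3 m' hm ⟨b, hb, hmb⟩ w y b hwm.symm hym'.symm hmb hwy.ne
              (fun hh => hw (hh ▸ hb)) (fun hh => hy (hh ▸ hb))
          have hq : (Walk.cons hwm.symm (Walk.cons hwy (Walk.cons hym' Walk.nil)) :
              G.Walk m m').IsPath := by
            rw [Walk.isPath_def]
            simp only [Walk.support_cons, Walk.support_nil, List.nodup_cons, List.mem_cons,
              List.mem_singleton, List.not_mem_nil, not_false_iff, List.nodup_nil, and_true]
            refine ⟨?_, ?_, ?_⟩
            · rintro (rfl | rfl | rfl | hh)
              · exact hwm.ne rfl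
              · exact hne rfl
              · exact hm'm rfl
              · exact hh
            · rintro (rfl | rfl | hh)
              · exact hwy.ne rfl
              · exact hm'w rfl
              · exact hh
            · rintro (rfl | hh)
              · exact hym'.ne rfl
              · exact hh
          have hall : ∀ z ∈ (Walk.cons hwm.symm (Walk.cons hwy (Walk.cons hym' Walk.nil)) :
              G.Walk m m').support, z ∉ p.support := by
            intro z hz
            simp only [Walk.support_cons, Walk.support_nil, List.mem_cons,
              List.mem_singleton, List.not_mem_nil] at hz
            rcases hz with rfl | rfl | rfl | rfl | hh
            · exact hm
            · exact hw
            · exact hy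
            · exact hm'
            · exact absurd hh (by simp)
          exact hm'm ((hbridge m b m' b' hm hm' hb hb' hmb hm'b' _ hq hall).symm)
  have hidx : ∀ w, w ∈ p.support → ∃ n, p.getVert n = w ∧ n ≤ p.length :=
    fun w hw => Walk.mem_support_iff_exists_getVert.mp hw
  have hinj := Stmt8Aux.getVert_inj hp
  let pair : ℕ → ℕ := fun i => if i % 2 = 0 then (if i < p.length then i + 1 else i) else i - 1
  have hpair_le : ∀ i, i ≤ p.length → pair i ≤ p.length := by
    intro i hi
    simp only [pair]
    split_ifs <;> omega
  have hpair_pair : ∀ i, i ≤ p.length → pair (pair i) = i := by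
    intro i hi
    simp only [pair]
    split_ifs <;> omega
  have hpair_fix : ∀ i, i ≤ p.length → pair i = i → i = p.length := by
    intro i hi
    simp only [pair]
    split_ifs <;> omega
  let μ : V → V := fun w =>
    if hw : w ∈ p.support then p.getVert (pair (Classical.choose (hidx w hw)))
    else Classical.choose (key w hw).exists
  have hμ_on : ∀ i, i ≤ p.length → μ (p.getVert i) = p.getVert (pair i) := by
    intro i hi
    have hmem : p.getVert i ∈ p.support := Walk.mem_support_iff_exists_getVert.mpr ⟨i, rfl, hi⟩
    simp only [μ, dif_pos hmem]
    have hspec := Classical.choose_spec (hidx _ hmem)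
    rw [hinj _ hspec.2 _ hi hspec.1]
  have hμ_off : ∀ w, (hw : w ∉ p.support) → (μ w ∉ p.support ∧ G.Adj w (μ w)) := by
    intro w hw
    simp only [μ, dif_neg hw]
    exact Classical.choose_spec (key w hw).exists
  have hμ_adj : ∀ w, μ w ≠ w → G.Adj w (μ w) := by
    intro w hne
    by_cases hw : w ∈ p.support
    · obtain ⟨i, rfl, hi⟩ := hidx w hw
      rw [hμ_on i hi] at hne ⊢
      simp only [pair] at hne ⊢
      split_ifs at hne ⊢ with h1 h2
      · exact p.adj_getVert_succ h2
      · exact absurd rfl hne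
      · have h0 : 1 ≤ i := by omega
        have hadj := p.adj_getVert_succ (i := i - 1) (by omega)
        rw [Nat.sub_add_cancel h0] at hadj
        exact hadj.symm
    · exact (hμ_off w hw).2
  have hμ_inv : ∀ w, μ (μ w) = w := by
    intro w
    by_cases hw : w ∈ p.support
    · obtain ⟨i, rfl, hi⟩ := hidx w hw
      rw [hμ_on i hi, hμ_on (pair i) (hpair_le i hi), hpair_pair i hi]
    · obtain ⟨hoff, hadj⟩ := hμ_off w hw
      obtain ⟨x, hx, hxu⟩ := key (μ w) hoff
      have e1 : μ (μ w) = x := hxu _ ⟨(hμ_off (μ w) hoff).1, (hμ_off (μ w) hoff).2⟩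
      have e2 : w = x := hxu _ ⟨hw, hadj.symm⟩
      rw [e1, ← e2]
  have hμ_fix : ∀ w, μ w = w → w = p.getVert p.length := by
    intro w hfix
    by_cases hw : w ∈ p.support
    · obtain ⟨i, rfl, hi⟩ := hidx w hw
      rw [hμ_on i hi] at hfix
      have hpi : pair i = i := hinj _ (hpair_le i hi) _ hi hfix
      rw [hpair_fix i hi hpi]
    · have hadj := (hμ_off w hw).2
      rw [hfix] at hadj
      exact absurd hadj (G.loopless.irrefl w)
  obtain ⟨M, hM, hMv⟩ := Stmt8Aux.matching_of_involution G μ hμ_inv hμ_adj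
  haveI : Fintype ↥M.verts := Fintype.ofFinite _
  have heven := hM.even_card
  have hcard : M.verts.ncard = M.verts.toFinset.card := Set.ncard_eq_toFinset_card' _
  haveI : Nonempty V := ⟨u⟩
  have hn1 : 1 ≤ Nat.card V := Nat.card_pos
  by_cases hfix : μ (p.getVert p.length) = p.getVert p.length
  · have hv : M.verts = {p.getVert p.length}ᶜ := by
      rw [hMv]
      ext y
      simp only [Set.mem_setOf_eq, Set.mem_compl_iff, Set.mem_singleton_iff]
      constructor
      · intro hy hy0
        exact hy (hy0 ▸ hfix)
      · intro hy0 hyfix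
        exact hy0 (hμ_fix y hyfix)
    have hvc : M.verts.ncard = Nat.card V - 1 := by
      rw [hv, Set.compl_eq_univ_diff, Set.ncard_diff (Set.subset_univ _), Set.ncard_univ,
        Set.ncard_singleton]
    constructor
    · intro hevenV
      exfalso
      have hodd : Even (Nat.card V - 1) := by
        rw [← hvc, hcard]
        exact heven
      rw [Nat.even_iff] at hodd hevenV
      omega
    · intro _
      exact ⟨M, hM, hvc⟩
  · have hv : M.verts = Set.univ := by
      rw [hMv]
      ext y
      simp only [Set.mem_setOf_eq, Set.mem_univ, iff_true]
      intro hyfix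
      exact hfix ((hμ_fix y hyfix) ▸ hyfix)
    constructor
    · intro _
      exact ⟨M, hM, fun a => hv ▸ Set.mem_univ a⟩
    · intro hodd
      exfalso
      apply hodd
      have : M.verts.ncard = Nat.card V := by rw [hv, Set.ncard_univ]
      rw [← this, hcard]
      exact heven
end

section
/- In every lobster shell, there exists an endpoint u of a longest path P and a matching M of T that covers all vertices except possibly u; in particular, if the order of T is odd, T has a matching missing only an endpoint of a longest path. -/
open SimpleGraph

set_option linter.unusedSectionVars false
set_option maxHeartbeats 1000000

namespace LobsterAux
variable {V : Type*} [DecidableEq V] {G : SimpleGraph V}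

lemma walks_eq (hT : G.IsTree) {x y : V} {q r : G.Walk x y}
    (hq : q.IsPath) (hr : r.IsPath) : q = r :=
  (hT.existsUnique_path x y).unique hq hr

lemma exists_segment {s t : V} (p : G.Walk s t) (hp : p.IsPath) {x y : V}
    (hx : x ∈ p.support) (hy : y ∈ p.support) :
    ∃ q : G.Walk x y, q.IsPath ∧ ∀ z ∈ q.support, z ∈ p.support := by
  by_cases h : x ∈ (p.takeUntil y hy).support
  · exact ⟨(p.takeUntil y hy).dropUntil x h, (hp.takeUntil hy).dropUntil h,
      fun z hz => p.support_takeUntil_subset hy ((p.takeUntil y hy).support_dropUntil_subset h hz)⟩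
  · have h2 : x ∈ (p.dropUntil y hy).support := by
      have hsp := p.take_spec hy
      rw [← hsp, Walk.mem_support_append_iff] at hx
      tauto
    refine ⟨((p.dropUntil y hy).takeUntil x h2).reverse,
      ((hp.dropUntil hy).takeUntil h2).reverse, ?_⟩
    intro z hz
    rw [Walk.support_reverse, List.mem_reverse] at hz
    exact p.support_dropUntil_subset hy ((p.dropUntil y hy).support_takeUntil_subset h2 hz)

lemma exists_attach {s t : V} (p : G.Walk s t) (hp : p.IsPath) {a b e : V}
    (ha : a ∉ p.support) (hab : G.Adj a b) (hb : b ∈ p.support) (he : e ∈ p.support) :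
    ∃ q : G.Walk a e, q.IsPath ∧ (∀ z ∈ q.support, z = a ∨ z ∈ p.support) ∧
      1 ≤ q.length ∧ b ∈ q.support := by
  obtain ⟨r, hr, hsub⟩ := exists_segment p hp hb he
  refine ⟨Walk.cons hab r, ?_, ?_, by simp, ?_⟩
  · rw [Walk.cons_isPath_iff]
    exact ⟨hr, fun h => ha (hsub a h)⟩
  · intro z hz
    rw [Walk.support_cons, List.mem_cons] at hz
    rcases hz with h | h
    · exact Or.inl h
    · exact Or.inr (hsub z h)
  · rw [Walk.support_cons, List.mem_cons]
    exact Or.inr r.start_mem_support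


lemma unique_on (hT : G.IsTree) {s t : V} (p : G.Walk s t) (hp : p.IsPath) {a b b' : V}
    (ha : a ∉ p.support) (hb : b ∈ p.support) (hb' : b' ∈ p.support)
    (hab : G.Adj a b) (hab' : G.Adj a b') : b = b' := by
  obtain ⟨q, hq, hsub, hlen, hbq⟩ := exists_attach p hp ha hab hb hb'
  have h1 : (Walk.cons hab' Walk.nil : G.Walk a b').IsPath := by
    simp [Walk.cons_isPath_iff, hab'.ne]
  have heq := walks_eq hT hq h1
  rw [heq] at hbq
  simp only [Walk.support_cons, Walk.support_nil, List.mem_cons, List.mem_singleton] at hbq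
  rcases hbq with h | h | h
  · exact absurd hb (h ▸ ha)
  · exact h
  · simp at h

lemma leg_struct (hT : G.IsTree) {s t : V} (p : G.Walk s t) (hp : p.IsPath)
    (hdist : ∀ x : V, ∃ e ∈ p.support, G.dist x e ≤ 2)
    (hdeg : ∀ x : V, x ∉ p.support → (∃ b ∈ p.support, G.Adj x b) → (G.neighborSet x).ncard = 2)
    {a b : V} (ha : a ∉ p.support) (hb : b ∈ p.support) (hab : G.Adj a b) :
    ∃ c, c ∉ p.support ∧ G.Adj a c ∧ G.neighborSet a = {b, c} ∧ G.neighborSet c = {a} := by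
  obtain ⟨x, y, hxy, hset⟩ := Set.ncard_eq_two.mp (hdeg a ha ⟨b, hb, hab⟩)
  have hbmem : b ∈ G.neighborSet a := hab
  rw [hset] at hbmem
  -- c is the element of {x,y} other than b
  obtain ⟨c, hcb, hsetbc⟩ : ∃ c, c ≠ b ∧ G.neighborSet a = {b, c} := by
    rcases hbmem with rfl | rfl
    · exact ⟨y, fun h => hxy h.symm, hset⟩
    · refine ⟨x, hxy, ?_⟩; rw [hset, Set.pair_comm]
  have hac : G.Adj a c := by
    have : c ∈ G.neighborSet a := by rw [hsetbc]; simp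
    exact this
  have hc : c ∉ p.support := fun hcL => hcb (unique_on hT p hp ha hcL hb hac hab)
  refine ⟨c, hc, hac, hsetbc, ?_⟩
  ext d
  simp only [mem_neighborSet, Set.mem_singleton_iff]
  constructor
  · intro hcd
    by_contra hd
    by_cases hdL : d ∈ p.support
    · -- two paths from a to d
      obtain ⟨q2, hq2, hsub2, _, _⟩ := exists_attach p hp ha hab hb hdL
      have hq1 : (Walk.cons hac (Walk.cons hcd Walk.nil) : G.Walk a d).IsPath := by
        simp [Walk.isPath_def]
        exact ⟨⟨hac.ne, fun h => ha (h ▸ hdL)⟩, hcd.ne⟩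
      have heq := walks_eq hT hq1 hq2
      have hcq1 : c ∈ q2.support := by rw [← heq]; simp
      rcases hsub2 c hcq1 with h | h
      · exact hac.ne' h
      · exact hc h
    · -- d is far; build long path d→e vs short
      obtain ⟨e, he, hdiste⟩ := hdist d
      obtain ⟨q2, hq2, hsub2, hlen2, _⟩ := exists_attach p hp ha hab hb he
      have hq1 : (Walk.cons hcd.symm (Walk.cons hac.symm q2) : G.Walk d e).IsPath := by
        simp [Walk.isPath_def, Walk.cons_isPath_iff]
        refine ⟨⟨fun h => hcd.ne h.symm, fun hdm => ?_⟩, fun hcm => ?_, hq2.support_nodup⟩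
        · rcases hsub2 d hdm with h | h
          · exact hd h
          · exact hdL h
        · rcases hsub2 c hcm with h | h
          · exact hac.ne' h
          · exact hc h
      -- short path from dist ≤ 2
      have hde : d ≠ e := fun h => hdL (h ▸ he)
      have hd0 : G.dist d e ≠ 0 :=
        dist_ne_zero_iff_ne_and_reachable.mpr ⟨hde, hT.isConnected.preconnected d e⟩
      obtain ⟨w, hw⟩ := exists_walk_of_dist_ne_zero hd0
      have heq := walks_eq hT hq1 w.bypass_isPath
      have hlq := congrArg Walk.length heq
      simp only [Walk.length_cons] at hlq
      have hble := w.length_bypass_le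
      omega
  · intro h; exact h ▸ hac.symm

lemma off_struct (hT : G.IsTree) {s t : V} (p : G.Walk s t) (hp : p.IsPath)
    (hdist : ∀ x : V, ∃ e ∈ p.support, G.dist x e ≤ 2)
    (hdeg : ∀ x : V, x ∉ p.support → (∃ b ∈ p.support, G.Adj x b) → (G.neighborSet x).ncard = 2)
    {x : V} (hx : x ∉ p.support) :
    ∃ y, y ∉ p.support ∧ G.Adj x y ∧ ∀ z, z ∉ p.support → G.Adj x z → z = y := by
  by_cases hleg : ∃ b ∈ p.support, G.Adj x b
  · obtain ⟨b, hb, hxb⟩ := hleg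
    obtain ⟨c, hc, hxc, hset, _⟩ := leg_struct hT p hp hdist hdeg hx hb hxb
    refine ⟨c, hc, hxc, fun z hz hxz => ?_⟩
    have hzmem : z ∈ G.neighborSet x := hxz
    rw [hset] at hzmem
    rcases hzmem with rfl | rfl
    · exact absurd hb hz
    · rfl
  · push_neg at hleg
    obtain ⟨e, he, hde⟩ := hdist x
    have hne : x ≠ e := fun h => hx (h ▸ he)
    have hd0 : G.dist x e ≠ 0 :=
      dist_ne_zero_iff_ne_and_reachable.mpr ⟨hne, hT.isConnected.preconnected x e⟩
    have hd1 : G.dist x e ≠ 1 := fun h => hleg e he (dist_eq_one_iff_adj.mp h)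
    obtain ⟨w, hw⟩ := exists_walk_of_dist_ne_zero hd0
    have hw2 : w.length = 2 := by omega
    -- destructure w
    cases w with
    | nil => simp at hw2
    | cons h1 w' =>
      rename_i m
      cases w' with
      | nil => simp at hw2
      | cons h2 w'' =>
        cases w'' with
        | nil =>
          -- h1 : G.Adj x m, h2 : G.Adj m e
          have hmL : m ∉ p.support := fun hm => hleg m hm h1
          obtain ⟨c, hcL, hmc, hsetm, hsing⟩ := leg_struct hT p hp hdist hdeg hmL he h2
          have hxm : x ∈ G.neighborSet m := h1.symm
          rw [hsetm] at hxm
          have hxc : x = c := by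
            rcases hxm with rfl | rfl
            · exact absurd he hx
            · rfl
          subst hxc
          refine ⟨m, hmL, h1, fun z hz hxz => ?_⟩
          have : z ∈ G.neighborSet x := hxz
          rw [hsing] at this
          exact this
        | cons _ _ => simp [Walk.length_cons] at hw2

end LobsterAux

open LobsterAux in
theorem stmt10 {V : Type*} [Fintype V] (G : SimpleGraph V)
    (h : IsLobsterShell G) :
    ∃ (u v : V) (p : G.Walk u v), IsLongestPath G p ∧
      ∃ M : G.Subgraph, M.IsMatching ∧ ∀ w : V, w ≠ u → w ∈ M.verts := by
  classical
  obtain ⟨hT, u, v, p, hlp, hdist, hdeg⟩ := h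
  have hp : p.IsPath := hlp.1
  have hnd : p.support.Nodup := hp.support_nodup
  have hinj : Function.Injective p.support.get := List.nodup_iff_injective_get.mp hnd
  have hlen : p.support.length = p.length + 1 := p.length_support
  have hadj_get : ∀ (i : ℕ) (hi : i + 1 < p.support.length),
      G.Adj (p.support.get ⟨i, by omega⟩) (p.support.get ⟨i + 1, hi⟩) := by
    intro i hi
    exact p.isChain_adj_support.getElem i (by omega)
  set Ron : V → V → Prop := fun a b => ∃ (i : ℕ) (hi : i + 1 < p.support.length),
    i % 2 ≠ p.length % 2 ∧
    ((a = p.support.get ⟨i, by omega⟩ ∧ b = p.support.get ⟨i + 1, hi⟩) ∨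
     (b = p.support.get ⟨i, by omega⟩ ∧ a = p.support.get ⟨i + 1, hi⟩)) with hRon
  set R : V → V → Prop := fun a b =>
    Ron a b ∨ (a ∉ p.support ∧ b ∉ p.support ∧ G.Adj a b) with hR
  have hRon_mem : ∀ a b, Ron a b → a ∈ p.support := by
    rintro a b ⟨i, hi, -, hc | hc⟩
    · exact hc.1 ▸ p.support.get_mem _
    · exact hc.2 ▸ p.support.get_mem _
  have hRon_symm : ∀ a b, Ron a b → Ron b a := by
    rintro a b ⟨i, hi, hpar, hc | hc⟩
    · exact ⟨i, hi, hpar, Or.inr hc⟩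
    · exact ⟨i, hi, hpar, Or.inl hc⟩
  have hRadj : ∀ a b, R a b → G.Adj a b := by
    rintro a b (⟨i, hi, -, hc | hc⟩ | ⟨-, -, hadj⟩)
    · exact hc.1 ▸ hc.2 ▸ hadj_get i hi
    · exact hc.1 ▸ hc.2 ▸ (hadj_get i hi).symm
    · exact hadj
  have hRsymm : ∀ a b, R a b → R b a := by
    rintro a b (hon | ⟨h1, h2, h3⟩)
    · exact Or.inl (hRon_symm a b hon)
    · exact Or.inr ⟨h2, h1, h3.symm⟩
  have hRuniq : ∀ a b b', R a b → R a b' → b = b' := by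
    rintro a b b' (⟨i, hi, hpar, hc⟩ | ⟨ha, hb, hadj⟩) hR2
    · rcases hR2 with ⟨i', hi', hpar', hc'⟩ | ⟨ha', -, -⟩
      · rcases hc with ⟨hc1, hc2⟩ | ⟨hc1, hc2⟩ <;> rcases hc' with ⟨hd1, hd2⟩ | ⟨hd1, hd2⟩
        · -- a at i, a at i'
          have hfe := hinj (hc1.symm.trans hd1)
          have hii : i = i' := congrArg Fin.val hfe
          subst hii
          rw [hc2, hd2]
        · -- a at i, a at i'+1 : parity contradiction
          have hfe := hinj (hc1.symm.trans hd2)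
          have hii : i = i' + 1 := congrArg Fin.val hfe
          omega
        · have hfe := hinj (hc2.symm.trans hd1)
          have hii : i + 1 = i' := congrArg Fin.val hfe
          omega
        · have hfe := hinj (hc2.symm.trans hd2)
          have hii : i + 1 = i' + 1 := congrArg Fin.val hfe
          have hii' : i = i' := by omega
          subst hii'
          rw [hc1, hd1]
      · exact absurd (hRon_mem a b ⟨i, hi, hpar, hc⟩) ha'
    · rcases hR2 with hon' | ⟨-, hb', hadj'⟩
      · exact absurd (hRon_mem a b' hon') ha
      · obtain ⟨y, -, -, huniq⟩ := off_struct hT p hp hdist hdeg ha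
        rw [huniq b hb hadj, huniq b' hb' hadj']
  refine ⟨u, v, p, hlp,
    ⟨{ verts := {x | ∃ y, R x y}, Adj := R,
       adj_sub := fun hab => hRadj _ _ hab,
       edge_vert := fun hab => ⟨_, hab⟩,
       symm := ⟨fun a b hab => hRsymm a b hab⟩ }, ?_, ?_⟩⟩
  · rintro x ⟨y, hy⟩
    exact ⟨y, hy, fun y' hy' => hRuniq x y' y hy' hy⟩
  · intro w hw
    by_cases hwL : w ∈ p.support
    · obtain ⟨j, hj⟩ := List.mem_iff_get.mp hwL
      have hu0 : p.support.get ⟨0, by omega⟩ = u := by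
        have := p.head_support
        rw [List.head_eq_getElem_zero p.support_ne_nil] at this
        rw [List.get_eq_getElem]
        exact this
      have hj0 : (j : ℕ) ≠ 0 := by
        intro h0
        apply hw
        rw [← hj, show j = (⟨0, by omega⟩ : Fin p.support.length) from Fin.ext h0]
        exact hu0
      by_cases hparj : (j : ℕ) % 2 = p.length % 2
      · have hi1 : ((j : ℕ) - 1) + 1 < p.support.length := by
          have := j.isLt; omega
        refine ⟨p.support.get ⟨(j : ℕ) - 1, by omega⟩,
          Or.inl ⟨(j : ℕ) - 1, hi1, by omega, Or.inr ⟨rfl, ?_⟩⟩⟩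
        rw [← hj]
        congr 1
        exact Fin.ext (by simp; omega)
      · have hjn : (j : ℕ) ≠ p.length := fun hh => hparj (by rw [hh])
        have hj1 : (j : ℕ) + 1 < p.support.length := by
          have := j.isLt; omega
        refine ⟨p.support.get ⟨(j : ℕ) + 1, hj1⟩,
          Or.inl ⟨(j : ℕ), hj1, hparj, Or.inl ⟨?_, rfl⟩⟩⟩
        exact hj.symm
    · obtain ⟨y, hy, hxy, -⟩ := off_struct hT p hp hdist hdeg hwL
      exact ⟨y, Or.inr ⟨hwL, hy, hxy⟩⟩
end
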